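/- arXiv:2510.15919 — 6 statements merged into one kernel-verified Lean document; each statement's English description precedes it below -/
import Mathlib

section
/- Let A be an m×m complex matrix with eigenvalues λ₁,…,λ_m (with multiplicity). Define spread(A) = max_{i,j} |λ_i − λ_j|. If A is real symmetric and m ≥ 3, then spread(A) ≤ sqrt(2‖A‖_F² − (2/m)|Tr(A)|²), where ‖A‖_F is the Frobenius norm. -/
lemma mirsky_sum_eig (m : ℕ) (A : Matrix (Fin m) (Fin m) ℝ) (hA : A.IsHermitian) :
    ∑ i, hA.eigenvalues i = A.trace := by
  have h := hA.spectral_theorem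
  have : A.trace = (Matrix.diagonal (RCLike.ofReal ∘ hA.eigenvalues)).trace := by
    conv_lhs => rw [h, Unitary.conjStarAlgAut_apply]
    rw [Matrix.trace_mul_cycle]
    simp [Matrix.mem_unitaryGroup_iff'.mp (hA.eigenvectorUnitary).2]
  simp [this, Matrix.trace_diagonal]

lemma mirsky_sum_eig_sq (m : ℕ) (A : Matrix (Fin m) (Fin m) ℝ) (hA : A.IsHermitian) :
    ∑ i, (hA.eigenvalues i)^2 = (A * A).trace := by
  set D : Matrix (Fin m) (Fin m) ℝ := Matrix.diagonal (RCLike.ofReal ∘ hA.eigenvalues) with hD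
  have h := hA.spectral_theorem
  have key : (A*A).trace = (D * D).trace := by
    conv_lhs => rw [h, Unitary.conjStarAlgAut_apply]
    rw [show ∀ U D : Matrix (Fin m) (Fin m) ℝ, (U * D * star U) * (U * D * star U)
        = U * (D * (star U * U) * D) * star U by intros; noncomm_ring]
    rw [Matrix.mem_unitaryGroup_iff'.mp (hA.eigenvectorUnitary).2, Matrix.trace_mul_cycle,
      ← mul_assoc, Matrix.mem_unitaryGroup_iff'.mp (hA.eigenvectorUnitary).2]
    simp [hD, Matrix.diagonal_mul_diagonal, Function.comp]
  simp [key, hD, Matrix.trace_diagonal, Matrix.diagonal_mul_diagonal, sq]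

lemma mirsky_trace_sq (m : ℕ) (A : Matrix (Fin m) (Fin m) ℝ) (hA : A.IsHermitian) :
    (A * A).trace = ∑ i, ∑ j, (A i j)^2 := by
  rw [Matrix.trace]
  simp only [Matrix.diag_apply, Matrix.mul_apply]
  refine Finset.sum_congr rfl fun i _ => Finset.sum_congr rfl fun j _ => ?_
  have := hA.apply j i
  simp only [star_trivial] at this
  rw [← this, sq]

lemma mirsky_key (m : ℕ) (hm : 3 ≤ m) (f : Fin m → ℝ) (i j : Fin m) (hij : i ≠ j) :
    (f i - f j)^2 ≤ 2 * ∑ k, (f k)^2 - (2/m) * (∑ k, f k)^2 := by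
  classical
  set s : Finset (Fin m) := Finset.univ \ {i, j} with hs
  have hsub : ({i, j} : Finset (Fin m)) ⊆ Finset.univ := Finset.subset_univ _
  have hcard : (s.card : ℝ) = (m : ℝ) - 2 := by
    rw [hs, Finset.card_sdiff_of_subset hsub]
    rw [Finset.card_pair hij]
    simp
    rw [Nat.cast_sub (by omega)]
    norm_num
  have hS : ∑ k, f k = (∑ k ∈ s, f k) + (f i + f j) := by
    rw [hs, ← Finset.sum_sdiff hsub, Finset.sum_pair hij]
  have hQ : ∑ k, (f k)^2 = (∑ k ∈ s, (f k)^2) + ((f i)^2 + (f j)^2) := by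
    rw [hs, ← Finset.sum_sdiff hsub, Finset.sum_pair hij]
  have hCS : (∑ k ∈ s, f k)^2 ≤ (s.card : ℝ) * ∑ k ∈ s, (f k)^2 :=
    sq_sum_le_card_mul_sum_sq
  set t := ∑ k ∈ s, f k
  set q := ∑ k ∈ s, (f k)^2
  rw [hS, hQ]
  rw [hcard] at hCS
  have hm' : (3:ℝ) ≤ (m:ℝ) := by exact_mod_cast hm
  have h1 : (0:ℝ) < m := by linarith
  rw [div_mul_eq_mul_div, le_sub_iff_add_le, add_comm, ← le_sub_iff_add_le, div_le_iff₀ h1]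
  nlinarith [sq_nonneg (((m:ℝ)-2) * (f i + f j) - 2 * t), sq_nonneg (f i + f j), sq_nonneg t]

lemma mirsky_nonneg (m : ℕ) (hm : 3 ≤ m) (f : Fin m → ℝ) :
    0 ≤ 2 * ∑ k, (f k)^2 - (2/m) * (∑ k, f k)^2 := by
  have hCS : (∑ k, f k)^2 ≤ ((Finset.univ : Finset (Fin m)).card : ℝ) * ∑ k, (f k)^2 :=
    sq_sum_le_card_mul_sum_sq
  simp only [Finset.card_univ, Fintype.card_fin] at hCS
  have h1 : (0:ℝ) < m := by exact_mod_cast (by omega : 0 < m)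
  rw [sub_nonneg, div_mul_eq_mul_div, div_le_iff₀ h1]
  nlinarith

open Finset in
/-- Mirsky's bound (1956): for a real symmetric `m × m` matrix `A` with `m ≥ 3`,
`spread A = max_{i,j} |λ_i - λ_j| ≤ sqrt (2 ‖A‖_F² - (2/m) |Tr A|²)`. -/
theorem mirsky_bound (m : ℕ) (hm : 3 ≤ m) (A : Matrix (Fin m) (Fin m) ℝ)
    (hA : A.IsHermitian) :
    (⨆ p : Fin m × Fin m, |hA.eigenvalues p.1 - hA.eigenvalues p.2|) ≤
      Real.sqrt (2 * ∑ i, ∑ j, (A i j) ^ 2 - (2 / m) * |Matrix.trace A| ^ 2) := by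
  have hpos : 0 < m := by omega
  haveI : Nonempty (Fin m) := Fin.pos_iff_nonempty.mp hpos
  set f := hA.eigenvalues with hf
  have hFrob : ∑ i, ∑ j, (A i j)^2 = ∑ k, (f k)^2 := by
    rw [mirsky_sum_eig_sq m A hA, mirsky_trace_sq m A hA]
  have hTr : |Matrix.trace A|^2 = (∑ k, f k)^2 := by
    rw [sq_abs, mirsky_sum_eig m A hA]
  rw [hFrob, hTr]
  apply ciSup_le
  rintro ⟨i, j⟩
  simp only
  rcases eq_or_ne i j with rfl | hij
  · simp only [sub_self, abs_zero]; exact Real.sqrt_nonneg _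
  · rw [Real.le_sqrt (abs_nonneg _) (mirsky_nonneg m hm f), sq_abs]
    exact mirsky_key m hm f i j hij
end

section
/- Let A be an m×m real symmetric matrix whose characteristic polynomial p is not λ^m, and let R(T) = resultant_λ(p(λ), p(T+λ)). Then spread(A) is the largest real root of R(T). -/
open Polynomial

/-- The Sylvester matrix of two polynomials `p` and `q` (with respect to their
natural degrees). -/
noncomputable def sylvester {R : Type*} [CommRing R] (p q : R[X]) :
    Matrix (Fin (p.natDegree + q.natDegree)) (Fin (p.natDegree + q.natDegree)) R :=
  Matrix.of fun i j =>
    if (i : ℕ) < q.natDegree then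
      (if (i : ℕ) ≤ (j : ℕ) ∧ (j : ℕ) ≤ (i : ℕ) + p.natDegree then
        p.coeff (p.natDegree - ((j : ℕ) - (i : ℕ))) else 0)
    else
      (if (i : ℕ) - q.natDegree ≤ (j : ℕ) ∧
          (j : ℕ) ≤ (i : ℕ) - q.natDegree + q.natDegree then
        q.coeff (q.natDegree - ((j : ℕ) - ((i : ℕ) - q.natDegree))) else 0)

/-- The resultant of two polynomials, as the determinant of their Sylvester matrix. -/
noncomputable def resultant {R : Type*} [CommRing R] (p q : R[X]) : R :=
  (_root_.sylvester p q).det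

noncomputable def sylAux {R : Type*} [CommRing R] (n k : ℕ) (p q : R[X]) :
    Matrix (Fin (n + k)) (Fin (n + k)) R :=
  Matrix.of fun i j =>
    if (i : ℕ) < k then
      (if (i : ℕ) ≤ (j : ℕ) ∧ (j : ℕ) ≤ (i : ℕ) + n then
        p.coeff (n - ((j : ℕ) - (i : ℕ))) else 0)
    else
      (if (i : ℕ) - k ≤ (j : ℕ) ∧ (j : ℕ) ≤ (i : ℕ) - k + k then
        q.coeff (k - ((j : ℕ) - ((i : ℕ) - k))) else 0)

lemma sylvester_eq_sylAux {R : Type*} [CommRing R] (p q : R[X]) :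
    _root_.sylvester p q = sylAux p.natDegree q.natDegree p q := rfl

lemma resultant_map {R S : Type*} [CommRing R] [CommRing S] (φ : R →+* S) (p q : R[X])
    (h1 : (p.map φ).natDegree = p.natDegree) (h2 : (q.map φ).natDegree = q.natDegree) :
    φ (_root_.resultant p q) = _root_.resultant (p.map φ) (q.map φ) := by
  have key : _root_.resultant (p.map φ) (q.map φ)
      = (sylAux p.natDegree q.natDegree (p.map φ) (q.map φ)).det := by
    rw [_root_.resultant, sylvester_eq_sylAux, h1, h2]
  rw [key, _root_.resultant, sylvester_eq_sylAux, RingHom.map_det]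
  congr 1
  ext i j
  simp only [RingHom.mapMatrix_apply, Matrix.map_apply, sylAux, Matrix.of_apply, apply_ite φ, map_zero, coeff_map]

lemma sum_aux1 {F : Type*} [Field F] (p : F[X]) (n k i : ℕ) (hi : i < k) (α : F) :
    ∑ j ∈ Finset.range (n + k),
      (if i ≤ j ∧ j ≤ i + n then p.coeff (n - (j - i)) else 0) * α ^ (n + k - 1 - j)
      = α ^ (k - 1 - i) * ∑ e ∈ Finset.range (n + 1), p.coeff e * α ^ e := by
  rw [← Finset.sum_subset (s₁ := Finset.Icc i (i + n))
      (by intro x hx; simp only [Finset.mem_Icc] at hx; simp only [Finset.mem_range]; omega)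
      (by intro x hx hx'; simp only [Finset.mem_Icc] at hx'; rw [if_neg (by omega), zero_mul])]
  rw [← Finset.Ico_add_one_right_eq_Icc, Finset.sum_Ico_eq_sum_range]
  have h1 : i + n + 1 - i = n + 1 := by omega
  rw [h1, Finset.mul_sum, ← Finset.sum_range_reflect
    (fun e => α ^ (k - 1 - i) * (p.coeff e * α ^ e)) (n + 1)]
  apply Finset.sum_congr rfl
  intro d hd
  simp only [Finset.mem_range] at hd
  rw [if_pos (by omega)]
  have h2 : i + d - i = d := by omega
  have h3 : n + 1 - 1 - d = n - d := by omega
  rw [h2, h3, ← mul_assoc, mul_comm (α ^ (k - 1 - i)) (p.coeff (n - d)), mul_assoc, ← pow_add]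
  congr 2
  omega

lemma sylAux_det_eq_zero_of_common_root {F : Type*} [Field F] (n k : ℕ) (p q : F[X])
    (hpn : p.natDegree = n) (hqk : q.natDegree = k) (hpos : 0 < n + k) {α : F}
    (hpα : p.IsRoot α) (hqα : q.IsRoot α) : (sylAux n k p q).det = 0 := by
  rw [← Matrix.exists_mulVec_eq_zero_iff]
  refine ⟨fun j => α ^ (n + k - 1 - (j : ℕ)), ?_, ?_⟩
  · intro h0
    have h1 := congrFun h0 ⟨n + k - 1, by omega⟩
    simp only [Pi.zero_apply] at h1
    rw [show n + k - 1 - (n + k - 1) = 0 by omega, pow_zero] at h1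
    exact one_ne_zero h1
  · funext i
    show ∑ j, sylAux n k p q i j * α ^ (n + k - 1 - (j : ℕ)) = 0
    by_cases hik : (i : ℕ) < k
    · simp only [sylAux, Matrix.of_apply, if_pos hik]
      rw [Fin.sum_univ_eq_sum_range (fun j =>
        (if (i : ℕ) ≤ j ∧ j ≤ (i : ℕ) + n then p.coeff (n - (j - (i : ℕ))) else 0)
          * α ^ (n + k - 1 - j)) (n + k)]
      rw [sum_aux1 p n k i hik α]
      have he : ∑ e ∈ Finset.range (n + 1), p.coeff e * α ^ e = p.eval α := by
        rw [Polynomial.eval_eq_sum_range, hpn]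
      rw [he, hpα.eq_zero, mul_zero]
    · simp only [sylAux, Matrix.of_apply, if_neg hik]
      rw [Fin.sum_univ_eq_sum_range (fun j =>
        (if (i : ℕ) - k ≤ j ∧ j ≤ (i : ℕ) - k + k then q.coeff (k - (j - ((i : ℕ) - k))) else 0)
          * α ^ (n + k - 1 - j)) (n + k)]
      have hik' : (i : ℕ) - k < n := by have := i.isLt; omega
      have haux := sum_aux1 q k n ((i : ℕ) - k) hik' α
      rw [Nat.add_comm k n] at haux
      rw [haux]
      have he : ∑ e ∈ Finset.range (k + 1), q.coeff e * α ^ e = q.eval α := by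
        rw [Polynomial.eval_eq_sum_range, hqk]
      rw [he, hqα.eq_zero, mul_zero]

lemma term_aux {F : Type*} [Field F] (p : F[X]) (n k i j : ℕ) (hn : p.natDegree = n)
    (hi : i < k) (hj : j < n + k) :
    (if k - 1 - i ≤ n + k - 1 - j then p.coeff ((n + k - 1 - j) - (k - 1 - i)) else 0)
      = if i ≤ j ∧ j ≤ i + n then p.coeff (n - (j - i)) else 0 := by
  rcases Nat.lt_or_ge j i with hij | hij
  · rw [if_pos (by omega), if_neg (by omega)]
    exact Polynomial.coeff_eq_zero_of_natDegree_lt (by omega)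
  · rcases Nat.lt_or_ge (i + n) j with hji | hji
    · rw [if_neg (by omega), if_neg (by omega)]
    · rw [if_pos (by omega), if_pos (by omega)]
      congr 1
      omega

lemma sylAux_common_root_of_det_eq_zero {F : Type*} [Field F] (n k : ℕ) (p q : F[X])
    (hpn : p.natDegree = n) (hqk : q.natDegree = k) (hn : 0 < n) (hk : 0 < k)
    (hsplit : p.Splits) (hdet : (sylAux n k p q).det = 0) :
    ∃ α, p.IsRoot α ∧ q.IsRoot α := by
  classical
  have hpne : p ≠ 0 := fun h => by rw [h, Polynomial.natDegree_zero] at hpn; omega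
  have hqne : q ≠ 0 := fun h => by rw [h, Polynomial.natDegree_zero] at hqk; omega
  obtain ⟨v, hv0, hv⟩ := (Matrix.exists_vecMul_eq_zero_iff).mpr hdet
  set w : ℕ → F := fun i => if h : i < n + k then v ⟨i, h⟩ else 0 with hw
  have hwv : ∀ i : Fin (n + k), w (i : ℕ) = v i := by
    intro i; simp [hw, i.isLt]
  set a : F[X] := ∑ i ∈ Finset.range k, C (w i) * X ^ (k - 1 - i) with ha
  set b : F[X] := ∑ i ∈ Finset.range n, C (w (k + i)) * X ^ (n - 1 - i) with hb
  have hsum_split : ∀ g : ℕ → F, ∑ i ∈ Finset.range (n + k), g i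
      = ∑ i ∈ Finset.range k, g i + ∑ i ∈ Finset.range n, g (k + i) := by
    intro g
    rw [Finset.range_eq_Ico,
      ← Finset.sum_Ico_consecutive g (Nat.zero_le k) (by omega : k ≤ n + k),
      ← Finset.range_eq_Ico, Finset.sum_Ico_eq_sum_range, Nat.add_sub_cancel]
  have hcoeff : ∀ c, (a * p + b * q).coeff c =
      ∑ i ∈ Finset.range k, w i * (if k - 1 - i ≤ c then p.coeff (c - (k - 1 - i)) else 0)
      + ∑ i ∈ Finset.range n,
          w (k + i) * (if n - 1 - i ≤ c then q.coeff (c - (n - 1 - i)) else 0) := by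
    intro c
    rw [Polynomial.coeff_add, ha, hb, Finset.sum_mul, Finset.sum_mul,
      Polynomial.finset_sum_coeff, Polynomial.finset_sum_coeff]
    congr 1
    · refine Finset.sum_congr rfl fun i _ => ?_
      rw [mul_right_comm, Polynomial.coeff_mul_X_pow']
      split
      · rw [Polynomial.coeff_C_mul]
      · exact (mul_zero _).symm
    · refine Finset.sum_congr rfl fun i _ => ?_
      rw [mul_right_comm, Polynomial.coeff_mul_X_pow']
      split
      · rw [Polynomial.coeff_C_mul]
      · exact (mul_zero _).symm
  have hzero : a * p + b * q = 0 := by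
    ext c
    rw [hcoeff c, Polynomial.coeff_zero]
    by_cases hc : c < n + k
    · set j : ℕ := n + k - 1 - c with hj
      have hjlt : j < n + k := by omega
      have hcj : c = n + k - 1 - j := by omega
      have hrow : ∑ i, v i * sylAux n k p q i ⟨j, hjlt⟩ = 0 := by
        have h0 := congrFun hv ⟨j, hjlt⟩
        simpa [Matrix.vecMul, dotProduct] using h0
      have hrowrange : ∑ i ∈ Finset.range (n + k), (fun i => w i *
          (if i < k then (if i ≤ j ∧ j ≤ i + n then p.coeff (n - (j - i)) else 0)
            else (if i - k ≤ j ∧ j ≤ i - k + k then q.coeff (k - (j - (i - k))) else 0))) i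
          = 0 := by
        rw [← Fin.sum_univ_eq_sum_range (fun i => w i *
          (if i < k then (if i ≤ j ∧ j ≤ i + n then p.coeff (n - (j - i)) else 0)
            else (if i - k ≤ j ∧ j ≤ i - k + k then q.coeff (k - (j - (i - k))) else 0))) (n + k)]
        refine Eq.trans (Finset.sum_congr rfl fun i _ => ?_) hrow
        rw [hwv i]
        rfl
      rw [hsum_split] at hrowrange
      refine Eq.trans ?_ hrowrange
      congr 1
      · refine Finset.sum_congr rfl fun i hi => ?_
        have hik : i < k := Finset.mem_range.mp hi
        rw [if_pos hik, hcj]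
        exact congrArg (w i * ·) (term_aux p n k i j hpn hik hjlt)
      · refine Finset.sum_congr rfl fun i hi => ?_
        have hin : i < n := Finset.mem_range.mp hi
        rw [if_neg (by omega : ¬ k + i < k), Nat.add_sub_cancel_left]
        have hcj2 : c = k + n - 1 - j := by omega
        rw [hcj2]
        exact congrArg (w (k + i) * ·) (term_aux q k n i j hqk hin (by omega))
    · rw [Finset.sum_eq_zero, Finset.sum_eq_zero, add_zero]
      · intro i hi
        have hin : i < n := Finset.mem_range.mp hi
        rw [if_pos (by omega), Polynomial.coeff_eq_zero_of_natDegree_lt (by omega), mul_zero]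
      · intro i hi
        have hik : i < k := Finset.mem_range.mp hi
        rw [if_pos (by omega), Polynomial.coeff_eq_zero_of_natDegree_lt (by omega), mul_zero]
  obtain ⟨i0, hvi0⟩ := Function.ne_iff.mp hv0
  have hab0 : a ≠ 0 ∨ b ≠ 0 := by
    by_cases hik0 : (i0 : ℕ) < k
    · left
      intro ha0
      have hacoeff : a.coeff (k - 1 - (i0 : ℕ)) = w (i0 : ℕ) := by
        rw [ha, Polynomial.finset_sum_coeff, Finset.sum_eq_single (i0 : ℕ)]
        · rw [Polynomial.coeff_C_mul, Polynomial.coeff_X_pow, if_pos rfl, mul_one]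
        · intro i hi hne
          rw [Polynomial.coeff_C_mul, Polynomial.coeff_X_pow,
            if_neg (by have := Finset.mem_range.mp hi; omega), mul_zero]
        · intro h; exact absurd (Finset.mem_range.mpr hik0) h
      rw [ha0, Polynomial.coeff_zero] at hacoeff
      exact hvi0 (by rw [← hwv i0, ← hacoeff]; rfl)
    · right
      intro hb0
      have hin0 : (i0 : ℕ) - k < n := by have := i0.isLt; omega
      have hbcoeff : b.coeff (n - 1 - ((i0 : ℕ) - k)) = w (k + ((i0 : ℕ) - k)) := by
        rw [hb, Polynomial.finset_sum_coeff, Finset.sum_eq_single ((i0 : ℕ) - k)]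
        · rw [Polynomial.coeff_C_mul, Polynomial.coeff_X_pow, if_pos rfl, mul_one]
        · intro i hi hne
          rw [Polynomial.coeff_C_mul, Polynomial.coeff_X_pow,
            if_neg (by have := Finset.mem_range.mp hi; omega), mul_zero]
        · intro h; exact absurd (Finset.mem_range.mpr hin0) h
      rw [hb0, Polynomial.coeff_zero] at hbcoeff
      have : k + ((i0 : ℕ) - k) = (i0 : ℕ) := by omega
      rw [this, hwv i0] at hbcoeff
      exact hvi0 hbcoeff.symm
  have hnotco : ¬ IsCoprime p q := by
    intro hco
    have hbdeg : b.natDegree ≤ n - 1 := by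
      rw [hb]
      exact Polynomial.natDegree_sum_le_of_forall_le _ _ fun i hi =>
        le_trans (Polynomial.natDegree_C_mul_X_pow_le _ _) (by omega)
    have hdvd : p ∣ b * q := ⟨-a, by linear_combination hzero⟩
    have hpb : p ∣ b := hco.dvd_of_dvd_mul_right hdvd
    rcases eq_or_ne b 0 with hb0 | hb0
    · rw [hb0, zero_mul, add_zero, mul_eq_zero] at hzero
      rcases hzero with ha0 | hp0
      · exact (hab0.resolve_right (fun h => h hb0)) ha0
      · exact hpne hp0
    · have := Polynomial.natDegree_le_of_dvd hpb hb0
      omega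
  set g := EuclideanDomain.gcd p q with hg
  have hgu : ¬ IsUnit g := fun h => hnotco (EuclideanDomain.gcd_isUnit_iff.mp h)
  have hgp : g ∣ p := EuclideanDomain.gcd_dvd_left p q
  have hgq : g ∣ q := EuclideanDomain.gcd_dvd_right p q
  have hg0 : g ≠ 0 := fun h => hpne (EuclideanDomain.gcd_eq_zero_iff.mp (hg ▸ h)).1
  have hgdeg : g.degree ≠ 0 := fun h => hgu (Polynomial.isUnit_iff_degree_eq_zero.mpr h)
  have hgsplit : g.Splits :=
    hsplit.of_dvd hpne hgp
  obtain ⟨α, hα⟩ := hgsplit.exists_eval_eq_zero hgdeg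
  have hgr : g.IsRoot α := by simpa using hα
  exact ⟨α, hgr.dvd hgp, hgr.dvd hgq⟩

lemma charpoly_conj_aux {R : Type*} [CommRing R] {m : Type*} [Fintype m] [DecidableEq m]
    (U D V : Matrix m m R) (hUV : U * V = 1) :
    (U * D * V).charpoly = D.charpoly := by
  have hmap1 : (U.map C) * (V.map C) = 1 := by
    rw [← Matrix.map_mul, hUV, Matrix.map_one _ (map_zero C) (map_one C)]
  have hchar : Matrix.charmatrix (U * D * V) = U.map C * Matrix.charmatrix D * V.map C := by
    unfold Matrix.charmatrix
    rw [Matrix.mul_sub, Matrix.sub_mul]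
    congr 1
    · rw [Matrix.scalar_apply, ← Matrix.smul_one_eq_diagonal, Matrix.mul_smul,
        Matrix.smul_mul, mul_one, hmap1]
    · simp only [RingHom.mapMatrix_apply]
      rw [← Matrix.map_mul, ← Matrix.map_mul]
  rw [Matrix.charpoly, Matrix.charpoly, hchar, Matrix.det_mul, Matrix.det_mul,
    mul_right_comm, ← Matrix.det_mul, hmap1, Matrix.det_one, one_mul]

lemma charpoly_diagonal_aux {R : Type*} [CommRing R] {m : Type*} [Fintype m] [DecidableEq m]
    (d : m → R) :
    (Matrix.diagonal d).charpoly = ∏ i, (X - C (d i)) := by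
  have : Matrix.charmatrix (Matrix.diagonal d) = Matrix.diagonal fun i => X - C (d i) := by
    ext i j
    by_cases h : i = j
    · subst h; simp
    · rw [Matrix.charmatrix_apply_ne _ _ _ h, Matrix.diagonal_apply_ne _ h,
        Matrix.diagonal_apply_ne _ h, map_zero, neg_zero]
  rw [Matrix.charpoly, this, Matrix.det_diagonal]

lemma hermitian_charpoly_eq_prod {m : ℕ} {A : Matrix (Fin m) (Fin m) ℝ}
    (hA : A.IsHermitian) : A.charpoly = ∏ i, (X - C (hA.eigenvalues i)) := by
  have hsp := hA.spectral_theorem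
  have h1 : A.charpoly = (Matrix.diagonal (RCLike.ofReal ∘ hA.eigenvalues) :
      Matrix (Fin m) (Fin m) ℝ).charpoly := by
    conv_lhs => rw [hsp]
    exact charpoly_conj_aux _ _ _ (Matrix.mem_unitaryGroup_iff.mp hA.eigenvectorUnitary.2)
  rw [h1, charpoly_diagonal_aux]
  simp

/-- For a real symmetric matrix `A` whose characteristic polynomial `p` is not `λ^m`,
the spread of `A` is the largest real root of
`R(T) = resultant_λ(p(λ), p(T+λ))`. -/
theorem spread_eq_largest_root_of_resultant (m : ℕ) (A : Matrix (Fin m) (Fin m) ℝ)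
    (hA : A.IsHermitian) (hp : A.charpoly ≠ X ^ m) :
    (_root_.resultant (A.charpoly.map Polynomial.C)
          ((A.charpoly.map Polynomial.C).comp (X + C (X : ℝ[X])))).IsRoot
        ((⨆ i, hA.eigenvalues i) - ⨅ i, hA.eigenvalues i) ∧
      ∀ t : ℝ,
        (_root_.resultant (A.charpoly.map Polynomial.C)
            ((A.charpoly.map Polynomial.C).comp (X + C (X : ℝ[X])))).IsRoot t →
          t ≤ (⨆ i, hA.eigenvalues i) - ⨅ i, hA.eigenvalues i := by
  classical
  have hm : 0 < m := by
    rcases Nat.eq_zero_or_pos m with h0 | h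
    · exfalso
      subst h0
      apply hp
      have hd0 : A.charpoly.natDegree = 0 := by
        rw [Matrix.charpoly_natDegree_eq_dim, Fintype.card_fin]
      rw [(Matrix.charpoly_monic A).natDegree_eq_zero.mp hd0, pow_zero]
    · exact h
  set μ := hA.eigenvalues with hμ
  have hdeg : A.charpoly.natDegree = m := by
    rw [Matrix.charpoly_natDegree_eq_dim, Fintype.card_fin]
  have hmon := Matrix.charpoly_monic A
  have hprod := hermitian_charpoly_eq_prod hA
  have hroot : ∀ x : ℝ, A.charpoly.IsRoot x ↔ ∃ i, x = μ i := by
    intro x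
    rw [hprod]
    simp only [IsRoot, eval_prod, eval_sub, eval_X, eval_C, Finset.prod_eq_zero_iff]
    constructor
    · rintro ⟨i, -, hi⟩; exact ⟨i, sub_eq_zero.mp hi⟩
    · rintro ⟨i, hi⟩; exact ⟨i, Finset.mem_univ i, sub_eq_zero.mpr hi⟩
  have hsplit : A.charpoly.Splits := by
    rw [hprod]
    exact Polynomial.Splits.prod fun i _ => Polynomial.Splits.X_sub_C _
  haveI : Nonempty (Fin m) := ⟨⟨0, hm⟩⟩
  obtain ⟨imax, hmax⟩ := exists_eq_ciSup_of_finite (f := μ)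
  obtain ⟨imin, hmin⟩ := exists_eq_ciInf_of_finite (f := μ)
  have hub : ∀ i, μ i ≤ ⨆ j, μ j := fun i =>
    le_ciSup (Set.Finite.bddAbove (Set.finite_range μ)) i
  have hlb : ∀ i, ⨅ j, μ j ≤ μ i := fun i =>
    ciInf_le (Set.Finite.bddBelow (Set.finite_range μ)) i
  set P := A.charpoly.map (C : ℝ →+* ℝ[X]) with hP
  have hPdeg : P.natDegree = m := by rw [hP, hmon.natDegree_map, hdeg]
  set Q := P.comp (X + C (X : ℝ[X])) with hQ
  have hQdeg : Q.natDegree = m := by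
    rw [hQ, Polynomial.natDegree_comp, natDegree_X_add_C, mul_one, hPdeg]
  have hcdeg : ∀ t : ℝ, (A.charpoly.comp (X + C t)).natDegree = m := fun t => by
    rw [Polynomial.natDegree_comp, natDegree_X_add_C, mul_one, hdeg]
  have heval : ∀ t : ℝ, (_root_.resultant P Q).eval t
      = _root_.resultant A.charpoly (A.charpoly.comp (X + C t)) := by
    intro t
    have hφ : (Polynomial.evalRingHom t).comp (C : ℝ →+* ℝ[X]) = RingHom.id ℝ := by
      ext x; simp
    have hPmap : P.map (Polynomial.evalRingHom t) = A.charpoly := by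
      rw [hP, Polynomial.map_map, hφ, Polynomial.map_id]
    have hQmap : Q.map (Polynomial.evalRingHom t) = A.charpoly.comp (X + C t) := by
      rw [hQ, Polynomial.map_comp, hPmap]
      congr 1
      simp
    have h := resultant_map (Polynomial.evalRingHom t) P Q
      (by rw [hPmap, hPdeg, hdeg]) (by rw [hQmap, hQdeg, hcdeg t])
    rw [hPmap, hQmap] at h
    exact h
  have hcomp_root : ∀ t α : ℝ,
      (A.charpoly.comp (X + C t)).IsRoot α ↔ A.charpoly.IsRoot (α + t) := by
    intro t α
    simp [IsRoot, Polynomial.eval_comp]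
  constructor
  · rw [IsRoot, heval, _root_.resultant, sylvester_eq_sylAux]
    apply sylAux_det_eq_zero_of_common_root _ _ _ _ rfl rfl
      (by rw [hdeg, hcdeg]; omega) (α := ⨅ j, μ j)
    · exact (hroot _).mpr ⟨imin, hmin.symm⟩
    · rw [hcomp_root]
      exact (hroot _).mpr ⟨imax, by rw [hmax]; ring⟩
  · intro t ht
    rw [IsRoot, heval, _root_.resultant, sylvester_eq_sylAux] at ht
    obtain ⟨α, hα1, hα2⟩ := sylAux_common_root_of_det_eq_zero _ _ _ _ rfl rfl
      (by rw [hdeg]; exact hm) (by rw [hcdeg]; exact hm) hsplit ht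
    obtain ⟨j, hj⟩ := (hroot _).mp hα1
    obtain ⟨i, hi⟩ := (hroot _).mp ((hcomp_root t α).mp hα2)
    have h1 := hub i
    have h2 := hlb j
    have : t = μ i - μ j := by rw [← hi, hj]; ring
    rw [this]
    exact sub_le_sub h1 h2
end

section
/- For m ≥ 2 and a > 0, every m×m real symmetric matrix A with all entries in [−a, a] satisfies spread(A) ≤ a·sqrt(2m²) if m is even, and spread(A) ≤ a·sqrt(2m² − 1) if m is odd. -/
open Matrix Finset

namespace ZhanAux

/-- packaged spectral data for a real symmetric matrix -/
lemma herm_package {m : ℕ} (E : Matrix (Fin m) (Fin m) ℝ) (hE : E.IsHermitian) :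
    ∃ U : Matrix (Fin m) (Fin m) ℝ,
      (∀ i j, ∑ x, U x i * U x j = if i = j then (1:ℝ) else 0) ∧
      (∀ x y, ∑ i, U x i * U y i = if x = y then (1:ℝ) else 0) ∧
      (∀ i j, E i j = ∑ k, U i k * hE.eigenvalues k * U j k) := by
  set U : Matrix (Fin m) (Fin m) ℝ := (hE.eigenvectorUnitary : Matrix (Fin m) (Fin m) ℝ) with hUdef
  have hspec : E = U * diagonal hE.eigenvalues * star U := by
    have h := hE.spectral_theorem
    rwa [RCLike.ofReal_real_eq_id, Function.id_comp] at h
  have hUU : star U * U = 1 := Matrix.mem_unitaryGroup_iff'.mp (hE.eigenvectorUnitary).2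
  have hUUt : U * star U = 1 := Matrix.mem_unitaryGroup_iff.mp (hE.eigenvectorUnitary).2
  refine ⟨U, ?_, ?_, ?_⟩
  · intro i j
    have h1 : (star U * U) i j = (1 : Matrix (Fin m) (Fin m) ℝ) i j := by rw [hUU]
    rw [Matrix.mul_apply] at h1
    simp only [Matrix.star_apply, star_trivial] at h1
    rw [Matrix.one_apply] at h1
    rw [← h1]
  · intro x y
    have h1 : (U * star U) x y = (1 : Matrix (Fin m) (Fin m) ℝ) x y := by rw [hUUt]
    rw [Matrix.mul_apply] at h1
    simp only [Matrix.star_apply, star_trivial] at h1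
    rw [Matrix.one_apply] at h1
    exact h1
  · intro i j
    conv_lhs => rw [hspec]
    rw [Matrix.mul_apply]
    refine Finset.sum_congr rfl fun k _ => ?_
    rw [Matrix.mul_diagonal]
    simp only [Matrix.star_apply, star_trivial]

variable {m : ℕ} {E : Matrix (Fin m) (Fin m) ℝ} {U : Matrix (Fin m) (Fin m) ℝ}
  {lam : Fin m → ℝ}

lemma sum_swap_blocks (F : Fin m → Fin m → Fin m → Fin m → ℝ) :
    ∑ i, ∑ j, ∑ k, ∑ l, F i j k l = ∑ k, ∑ l, ∑ i, ∑ j, F i j k l := by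
  have h1 : ∀ (G : Fin m → Fin m → ℝ), ∑ i, ∑ j, G i j = ∑ j, ∑ i, G i j :=
    fun G => Finset.sum_comm
  calc ∑ i, ∑ j, ∑ k, ∑ l, F i j k l
      = ∑ i, ∑ k, ∑ j, ∑ l, F i j k l := Finset.sum_congr rfl fun i _ => h1 _
    _ = ∑ k, ∑ i, ∑ j, ∑ l, F i j k l := h1 _
    _ = ∑ k, ∑ i, ∑ l, ∑ j, F i j k l :=
        Finset.sum_congr rfl fun k _ => Finset.sum_congr rfl fun i _ => h1 _
    _ = ∑ k, ∑ l, ∑ i, ∑ j, F i j k l := Finset.sum_congr rfl fun k _ => h1 _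

lemma pull2 (c : ℝ) (a b : Fin m → ℝ) :
    ∑ i, ∑ j, c * (a i * b j) = c * ((∑ i, a i) * (∑ j, b j)) := by
  rw [Finset.sum_mul_sum, Finset.mul_sum]
  exact Finset.sum_congr rfl fun i _ => by rw [Finset.mul_sum]

/-- sum of squares of eigenvalues equals sum of squares of entries -/
lemma sum_sq_eig
    (hcol : ∀ i j, ∑ x, U x i * U x j = if i = j then (1:ℝ) else 0)
    (hent : ∀ i j, E i j = ∑ k, U i k * lam k * U j k) :
    ∑ k, lam k ^ 2 = ∑ i, ∑ j, E i j ^ 2 := by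
  symm
  have key : ∀ i j, E i j ^ 2 = ∑ k, ∑ l, (lam k * lam l) * ((U i k * U i l) * (U j k * U j l)) := by
    intro i j
    rw [sq, hent i j, Finset.sum_mul_sum]
    exact Finset.sum_congr rfl fun k _ => Finset.sum_congr rfl fun l _ => by ring
  calc ∑ i, ∑ j, E i j ^ 2
      = ∑ i, ∑ j, ∑ k, ∑ l, (lam k * lam l) * ((U i k * U i l) * (U j k * U j l)) := by
        exact Finset.sum_congr rfl fun i _ => Finset.sum_congr rfl fun j _ => key i j
    _ = ∑ k, ∑ l, ∑ i, ∑ j, (lam k * lam l) * ((U i k * U i l) * (U j k * U j l)) :=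
        sum_swap_blocks _
    _ = ∑ k, ∑ l, (lam k * lam l) * ((∑ i, U i k * U i l) * (∑ j, U j k * U j l)) := by
        exact Finset.sum_congr rfl fun k _ => Finset.sum_congr rfl fun l _ => pull2 _ _ _
    _ = ∑ k, lam k ^ 2 := by
        refine Finset.sum_congr rfl fun k _ => ?_
        rw [Finset.sum_eq_single k]
        · rw [hcol k k]; simp [sq]
        · intro l _ hl
          rw [hcol k l, if_neg (fun h => hl h.symm)]
          ring
        · intro h; exact absurd (Finset.mem_univ k) h

lemma trace_eig
    (hcol : ∀ i j, ∑ x, U x i * U x j = if i = j then (1:ℝ) else 0)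
    (hent : ∀ i j, E i j = ∑ k, U i k * lam k * U j k) :
    ∑ k, lam k = ∑ i, E i i := by
  symm
  calc ∑ i, E i i = ∑ i, ∑ k, lam k * (U i k * U i k) := by
        refine Finset.sum_congr rfl fun i _ => ?_
        rw [hent i i]
        exact Finset.sum_congr rfl fun k _ => by ring
    _ = ∑ k, lam k * ∑ i, U i k * U i k := by
        rw [Finset.sum_comm]
        exact Finset.sum_congr rfl fun k _ => by rw [Finset.mul_sum]
    _ = ∑ k, lam k := by
        refine Finset.sum_congr rfl fun k _ => ?_
        rw [hcol k k, if_pos rfl, mul_one]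

/-- coordinates of a vector in the eigenbasis -/
noncomputable def wcoord (U : Matrix (Fin m) (Fin m) ℝ) (v : Fin m → ℝ) : Fin m → ℝ :=
  fun k => ∑ x, U x k * v x

lemma norm_w (hrow : ∀ x y, ∑ i, U x i * U y i = if x = y then (1:ℝ) else 0)
    (v : Fin m → ℝ) : ∑ k, (wcoord U v k) ^ 2 = ∑ x, (v x) ^ 2 := by
  calc ∑ k, (wcoord U v k) ^ 2
      = ∑ k, ∑ x, ∑ y, (v x * v y) * (U x k * U y k) := by
        refine Finset.sum_congr rfl fun k _ => ?_
        rw [sq, wcoord, Finset.sum_mul_sum]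
        exact Finset.sum_congr rfl fun x _ => Finset.sum_congr rfl fun y _ => by ring
    _ = ∑ x, ∑ y, ∑ k, (v x * v y) * (U x k * U y k) := by
        rw [Finset.sum_comm]
        exact Finset.sum_congr rfl fun x _ => Finset.sum_comm
    _ = ∑ x, ∑ y, (v x * v y) * ∑ k, U x k * U y k := by
        exact Finset.sum_congr rfl fun x _ => Finset.sum_congr rfl fun y _ =>
          (Finset.mul_sum _ _ _).symm
    _ = ∑ x, (v x) ^ 2 := by
        refine Finset.sum_congr rfl fun x _ => ?_
        rw [Finset.sum_eq_single x]
        · rw [hrow x x, if_pos rfl]; ring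
        · intro y _ hy; rw [hrow x y, if_neg (fun h => hy h.symm)]; ring
        · intro h; exact absurd (Finset.mem_univ x) h

/-- quadratic form in terms of eigenvalues -/
lemma quad_eq
    (hent : ∀ i j, E i j = ∑ k, U i k * lam k * U j k)
    (v : Fin m → ℝ) :
    ∑ i, ∑ j, v i * E i j * v j = ∑ k, lam k * (wcoord U v k) ^ 2 := by
  symm
  calc ∑ k, lam k * (wcoord U v k) ^ 2
      = ∑ k, ∑ i, ∑ j, (U i k * lam k * U j k) * (v i * v j) := by
        refine Finset.sum_congr rfl fun k _ => ?_
        rw [sq, wcoord, Finset.sum_mul_sum, Finset.mul_sum]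
        refine Finset.sum_congr rfl fun i _ => ?_
        rw [Finset.mul_sum]
        exact Finset.sum_congr rfl fun j _ => by ring
    _ = ∑ i, ∑ j, (∑ k, U i k * lam k * U j k) * (v i * v j) := by
        rw [Finset.sum_comm]
        refine Finset.sum_congr rfl fun i _ => ?_
        rw [Finset.sum_comm]
        exact Finset.sum_congr rfl fun j _ => (Finset.sum_mul _ _ _).symm
    _ = ∑ i, ∑ j, v i * E i j * v j := by
        refine Finset.sum_congr rfl fun i _ => Finset.sum_congr rfl fun j _ => ?_
        rw [← hent i j]; ring

/-- norm squared of E·v in terms of eigenvalues -/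
lemma normEv
    (hcol : ∀ i j, ∑ x, U x i * U x j = if i = j then (1:ℝ) else 0)
    (hent : ∀ i j, E i j = ∑ k, U i k * lam k * U j k)
    (v : Fin m → ℝ) :
    ∑ i, (∑ j, E i j * v j) ^ 2 = ∑ k, (lam k)^2 * (wcoord U v k) ^ 2 := by
  have hEv : ∀ i, ∑ j, E i j * v j = ∑ k, U i k * (lam k * wcoord U v k) := by
    intro i
    calc ∑ j, E i j * v j = ∑ j, ∑ k, (U i k * lam k) * (U j k * v j) := by
          refine Finset.sum_congr rfl fun j _ => ?_
          rw [hent i j, Finset.sum_mul]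
          exact Finset.sum_congr rfl fun k _ => by ring
      _ = ∑ k, ∑ j, (U i k * lam k) * (U j k * v j) := Finset.sum_comm
      _ = ∑ k, U i k * (lam k * wcoord U v k) := by
          refine Finset.sum_congr rfl fun k _ => ?_
          rw [wcoord, Finset.mul_sum, Finset.mul_sum]
          exact Finset.sum_congr rfl fun j _ => by ring
  calc ∑ i, (∑ j, E i j * v j) ^ 2
      = ∑ i, ∑ k, ∑ l, ((lam k * wcoord U v k) * (lam l * wcoord U v l)) * (U i k * U i l) := by
        refine Finset.sum_congr rfl fun i _ => ?_
        rw [hEv i, sq, Finset.sum_mul_sum]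
        exact Finset.sum_congr rfl fun k _ => Finset.sum_congr rfl fun l _ => by ring
    _ = ∑ k, ∑ l, ((lam k * wcoord U v k) * (lam l * wcoord U v l)) * ∑ i, U i k * U i l := by
        rw [Finset.sum_comm]
        refine Finset.sum_congr rfl fun k _ => ?_
        rw [Finset.sum_comm]
        exact Finset.sum_congr rfl fun l _ => (Finset.mul_sum _ _ _).symm
    _ = ∑ k, (lam k)^2 * (wcoord U v k) ^ 2 := by
        refine Finset.sum_congr rfl fun k _ => ?_
        rw [Finset.sum_eq_single k]
        · rw [hcol k k, if_pos rfl]; ring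
        · intro l _ hl; rw [hcol k l, if_neg (fun h => hl h.symm)]; ring
        · intro h; exact absurd (Finset.mem_univ k) h

/-- products of signs -/
lemma pm_mul {u v : ℝ} (hu : u = 1 ∨ u = -1) (hv : v = 1 ∨ v = -1) :
    u * v = 1 ∨ u * v = -1 := by rcases hu with rfl | rfl <;> rcases hv with rfl | rfl <;> norm_num

lemma pm_sq {u : ℝ} (hu : u = 1 ∨ u = -1) : u * u = 1 := by
  rcases hu with rfl | rfl <;> norm_num

set_option maxHeartbeats 2000000 in
/-- key sum-of-squares bound: three pairwise distinct sign pairs -/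
lemma sos3 {g1 h1 g2 h2 g3 h3 b1 b2 b3 : ℝ}
    (hg1 : g1 = 1 ∨ g1 = -1) (hh1 : h1 = 1 ∨ h1 = -1)
    (hg2 : g2 = 1 ∨ g2 = -1) (hh2 : h2 = 1 ∨ h2 = -1)
    (hg3 : g3 = 1 ∨ g3 = -1) (hh3 : h3 = 1 ∨ h3 = -1)
    (hd12 : ¬(g1 = g2 ∧ h1 = h2)) (hd13 : ¬(g1 = g3 ∧ h1 = h3))
    (hd23 : ¬(g2 = g3 ∧ h2 = h3)) :
    b1^2 + b2^2 + b3^2 ≤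
      (b1 + g1*b2 + h1*b3)^2 + (b1 + g2*b2 + h2*b3)^2 + (b1 + g3*b2 + h3*b3)^2 := by
  rcases hg1 with rfl | rfl <;> rcases hh1 with rfl | rfl <;>
  rcases hg2 with rfl | rfl <;> rcases hh2 with rfl | rfl <;>
  rcases hg3 with rfl | rfl <;> rcases hh3 with rfl | rfl <;>
  first
    | (norm_num at hd12; done)
    | (norm_num at hd13; done)
    | (norm_num at hd23; done)
    | nlinarith [sq_nonneg (b1+b2), sq_nonneg (b1-b2), sq_nonneg (b1+b3), sq_nonneg (b1-b3),
        sq_nonneg (b2+b3), sq_nonneg (b2-b3)]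

/-- a nonzero vector in the kernel of two functionals on ℝ³ -/
lemma exists_ker3 (r s : Fin 3 → ℝ) :
    ∃ β : Fin 3 → ℝ, β ≠ 0 ∧ (∑ k, β k * r k) = 0 ∧ (∑ k, β k * s k) = 0 := by
  let f : (Fin 3 → ℝ) →ₗ[ℝ] ℝ × ℝ :=
    { toFun := fun β => (∑ k, β k * r k, ∑ k, β k * s k)
      map_add' := by
        intro u v
        simp only [Pi.add_apply, add_mul, Finset.sum_add_distrib, Prod.mk_add_mk]
      map_smul' := by
        intro c v
        simp only [Pi.smul_apply, smul_eq_mul, RingHom.id_apply, Prod.smul_mk, Finset.mul_sum,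
          mul_assoc] }
  have hnoninj : ¬ Function.Injective f := by
    intro hinj
    have h3 := LinearMap.finrank_le_finrank_of_injective hinj
    rw [Module.finrank_fintype_fun_eq_card] at h3
    simp [Module.finrank_prod] at h3
    try omega
  rw [Function.not_injective_iff] at hnoninj
  obtain ⟨u, v, huv, hne⟩ := hnoninj
  refine ⟨u - v, sub_ne_zero.mpr hne, ?_, ?_⟩
  · have := congrArg Prod.fst huv
    simp only [f, LinearMap.coe_mk, AddHom.coe_mk] at this ⊢
    simp only [Pi.sub_apply, sub_mul, Finset.sum_sub_distrib]
    rw [this]; try ring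
  · have := congrArg Prod.snd huv
    simp only [f, LinearMap.coe_mk, AddHom.coe_mk] at this ⊢
    simp only [Pi.sub_apply, sub_mul, Finset.sum_sub_distrib]
    rw [this]; try ring

/-- eigen-equation for columns of U -/
lemma eigcol
    (hcol : ∀ i j, ∑ x, U x i * U x j = if i = j then (1:ℝ) else 0)
    (hent : ∀ i j, E i j = ∑ k, U i k * lam k * U j k)
    (I : Fin m) (i : Fin m) : ∑ j, E i j * U j I = lam I * U i I := by
  calc ∑ j, E i j * U j I = ∑ j, ∑ l, (U i l * lam l) * (U j l * U j I) := by
        refine Finset.sum_congr rfl fun j _ => ?_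
        rw [hent i j, Finset.sum_mul]
        exact Finset.sum_congr rfl fun l _ => by ring
    _ = ∑ l, (U i l * lam l) * ∑ j, U j l * U j I := by
        rw [Finset.sum_comm]
        exact Finset.sum_congr rfl fun l _ => (Finset.mul_sum _ _ _).symm
    _ = lam I * U i I := by
        rw [Finset.sum_eq_single I]
        · rw [hcol I I, if_pos rfl]; ring
        · intro l _ hl; rw [hcol l I, if_neg hl]; ring
        · intro h; exact absurd (Finset.mem_univ I) h

/-- if the product of two ±1 columns is constant, they are ±-equal -/
lemma prod_const_impl {m : ℕ} (c1 c2 : Fin m → ℝ)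
    (hp1 : ∀ x, c1 x = 1 ∨ c1 x = -1) (hp2 : ∀ x, c2 x = 1 ∨ c2 x = -1)
    (G : ℝ) (hGpm : G = 1 ∨ G = -1) (hG : ∀ x, c1 x * c2 x = G) :
    (∀ x, c1 x = c2 x) ∨ (∀ x, c1 x = - c2 x) := by
  rcases hGpm with rfl | rfl
  · left; intro x
    have h1 := hG x
    rcases hp1 x with e1 | e1 <;> rcases hp2 x with e2 | e2 <;>
      rw [e1, e2] at h1 ⊢ <;> revert h1 <;> norm_num
  · right; intro x
    have h1 := hG x
    rcases hp1 x with e1 | e1 <;> rcases hp2 x with e2 | e2 <;>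
      rw [e1, e2] at h1 ⊢ <;> revert h1 <;> norm_num

/-- from three pairwise non-±-equal sign columns, extract three coordinates whose
sign-pair invariants are pairwise distinct -/
lemma pattern_triple {m : ℕ} (hm : 0 < m) (c1 c2 c3 : Fin m → ℝ)
    (hp1 : ∀ x, c1 x = 1 ∨ c1 x = -1) (hp2 : ∀ x, c2 x = 1 ∨ c2 x = -1)
    (hp3 : ∀ x, c3 x = 1 ∨ c3 x = -1)
    (h12 : ¬((∀ x, c1 x = c2 x) ∨ (∀ x, c1 x = - c2 x)))
    (h13 : ¬((∀ x, c1 x = c3 x) ∨ (∀ x, c1 x = - c3 x)))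
    (h23 : ¬((∀ x, c2 x = c3 x) ∨ (∀ x, c2 x = - c3 x))) :
    ∃ x1 x2 x3 : Fin m,
      ¬(c1 x1 * c2 x1 = c1 x2 * c2 x2 ∧ c1 x1 * c3 x1 = c1 x2 * c3 x2) ∧
      ¬(c1 x1 * c2 x1 = c1 x3 * c2 x3 ∧ c1 x1 * c3 x1 = c1 x3 * c3 x3) ∧
      ¬(c1 x2 * c2 x2 = c1 x3 * c2 x3 ∧ c1 x2 * c3 x2 = c1 x3 * c3 x3) := by
  have hgconst : ∀ (G : ℝ), (∀ x, c1 x * c2 x = G) → False := by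
    intro G hG
    have hGpm : G = 1 ∨ G = -1 := (hG ⟨0, hm⟩) ▸ pm_mul (hp1 _) (hp2 _)
    exact h12 (prod_const_impl c1 c2 hp1 hp2 G hGpm hG)
  have hhconst : ∀ (G : ℝ), (∀ x, c1 x * c3 x = G) → False := by
    intro G hG
    have hGpm : G = 1 ∨ G = -1 := (hG ⟨0, hm⟩) ▸ pm_mul (hp1 _) (hp3 _)
    exact h13 (prod_const_impl c1 c3 hp1 hp3 G hGpm hG)
  have hghconst : ∀ (G : ℝ), (∀ x, (c1 x * c2 x) * (c1 x * c3 x) = G) → False := by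
    intro G hG
    have hgh : ∀ x, c2 x * c3 x = G := by
      intro x
      have h1 := hG x
      have h2 : c1 x * c1 x = 1 := pm_sq (hp1 x)
      linear_combination h1 - (c2 x * c3 x) * h2
    have hGpm : G = 1 ∨ G = -1 := (hgh ⟨0, hm⟩) ▸ pm_mul (hp2 _) (hp3 _)
    exact h23 (prod_const_impl c2 c3 hp2 hp3 G hGpm hgh)
  by_cases hall : ∀ x, c1 x * c2 x = c1 ⟨0, hm⟩ * c2 ⟨0, hm⟩ ∧
      c1 x * c3 x = c1 ⟨0, hm⟩ * c3 ⟨0, hm⟩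
  · exact absurd (fun x => (hall x).1) (fun hc => hgconst _ hc)
  · obtain ⟨x1, hx1⟩ := not_forall.mp hall
    by_cases hall2 : ∀ x, (c1 x * c2 x = c1 ⟨0, hm⟩ * c2 ⟨0, hm⟩ ∧
        c1 x * c3 x = c1 ⟨0, hm⟩ * c3 ⟨0, hm⟩) ∨
        (c1 x * c2 x = c1 x1 * c2 x1 ∧ c1 x * c3 x = c1 x1 * c3 x1)
    · exfalso
      by_cases hgg : c1 ⟨0, hm⟩ * c2 ⟨0, hm⟩ = c1 x1 * c2 x1
      · refine hgconst (c1 ⟨0, hm⟩ * c2 ⟨0, hm⟩) (fun x => ?_)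
        rcases hall2 x with ⟨h1, _⟩ | ⟨h1, _⟩
        · exact h1
        · rw [h1, hgg]
      · by_cases hhh : c1 ⟨0, hm⟩ * c3 ⟨0, hm⟩ = c1 x1 * c3 x1
        · refine hhconst (c1 ⟨0, hm⟩ * c3 ⟨0, hm⟩) (fun x => ?_)
          rcases hall2 x with ⟨_, h1⟩ | ⟨_, h1⟩
          · exact h1
          · rw [h1, hhh]
        · have hgx1 : c1 x1 * c2 x1 = - (c1 ⟨0, hm⟩ * c2 ⟨0, hm⟩) := by
            rcases pm_mul (hp1 x1) (hp2 x1) with f1 | f1 <;>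
              rcases pm_mul (hp1 ⟨0, hm⟩) (hp2 ⟨0, hm⟩) with f0 | f0 <;>
              rw [f0, f1] <;> rw [f0, f1] at hgg <;> revert hgg <;> norm_num
          have hhx1 : c1 x1 * c3 x1 = - (c1 ⟨0, hm⟩ * c3 ⟨0, hm⟩) := by
            rcases pm_mul (hp1 x1) (hp3 x1) with f1 | f1 <;>
              rcases pm_mul (hp1 ⟨0, hm⟩) (hp3 ⟨0, hm⟩) with f0 | f0 <;>
              rw [f0, f1] <;> rw [f0, f1] at hhh <;> revert hhh <;> norm_num
          refine hghconst ((c1 ⟨0, hm⟩ * c2 ⟨0, hm⟩) * (c1 ⟨0, hm⟩ * c3 ⟨0, hm⟩))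
            (fun x => ?_)
          rcases hall2 x with ⟨h1, h2⟩ | ⟨h1, h2⟩
          · rw [h1, h2]
          · rw [h1, h2, hgx1, hhx1]; ring
    · obtain ⟨x2, hx2⟩ := not_forall.mp hall2
      refine ⟨⟨0, hm⟩, x1, x2, ?_, ?_, ?_⟩
      · intro hc; exact hx1 ⟨hc.1.symm, hc.2.symm⟩
      · intro hc; exact hx2 (Or.inl ⟨hc.1.symm, hc.2.symm⟩)
      · intro hc; exact hx2 (Or.inr ⟨hc.1.symm, hc.2.symm⟩)

lemma sum_three_support {m : ℕ} {j1 j2 j3 : Fin m} (hj12 : j1 ≠ j2) (hj13 : j1 ≠ j3)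
    (hj23 : j2 ≠ j3) (F : Fin m → ℝ) (hF : ∀ x, x ≠ j1 → x ≠ j2 → x ≠ j3 → F x = 0) :
    ∑ x, F x = F j1 + F j2 + F j3 := by
  have hsub : ({j1, j2, j3} : Finset (Fin m)) ⊆ Finset.univ := Finset.subset_univ _
  rw [← Finset.sum_subset hsub (fun x _ hx => ?_)]
  · rw [Finset.sum_insert (by simp [hj12, hj13]), Finset.sum_insert (by simp [hj23]),
      Finset.sum_singleton]
    ring
  · simp only [Finset.mem_insert, Finset.mem_singleton, not_or] at hx
    exact hF x hx.1 hx.2.1 hx.2.2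

set_option maxHeartbeats 1000000 in
/-- Spread bound for symmetric ±1 matrices in odd dimension -/
theorem sign_spread_sq {m : ℕ} (hm : 3 ≤ m) (hodd : Odd m)
    {E : Matrix (Fin m) (Fin m) ℝ} (hE : E.IsHermitian)
    (hpm : ∀ i j, E i j = 1 ∨ E i j = -1)
    {I J : Fin m} (hI : ∀ k, hE.eigenvalues k ≤ hE.eigenvalues I)
    (hJ : ∀ k, hE.eigenvalues J ≤ hE.eigenvalues k) :
    (hE.eigenvalues I - hE.eigenvalues J)^2 ≤ 2*(m:ℝ)^2 - 1 := by
  obtain ⟨U, hcol, hrow, hent⟩ := herm_package E hE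
  set lam : Fin m → ℝ := hE.eigenvalues with hlam
  have hm0 : 0 < m := by omega
  have hm1 : (1:ℝ) ≤ (m:ℝ) := by
    have : (1:ℕ) ≤ m := by omega
    exact_mod_cast this
  have hsum : ∑ k, lam k ^ 2 = (m:ℝ)^2 := by
    rw [sum_sq_eig hcol hent]
    have : ∀ i j : Fin m, (E i j)^2 = 1 := by
      intro i j; rcases hpm i j with h | h <;> rw [h] <;> norm_num
    simp only [this, Finset.sum_const, Finset.card_univ, Fintype.card_fin, nsmul_eq_mul,
      mul_one]
    push_cast; ring
  by_cases hIJ : I = J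
  · subst hIJ
    simp only [sub_self]
    nlinarith [hm1]
  -- decomposition of the eigenvalue mass
  have hsplit : lam I ^ 2 + lam J ^ 2 + ∑ k ∈ Finset.univ \ {I, J}, lam k ^ 2 = (m:ℝ)^2 := by
    have hsub : ({I, J} : Finset (Fin m)) ⊆ Finset.univ := Finset.subset_univ _
    have := Finset.sum_sdiff (f := fun k => lam k ^ 2) hsub
    rw [Finset.sum_pair hIJ] at this
    linarith [this, hsum]
  have hQnonneg : (0:ℝ) ≤ ∑ k ∈ Finset.univ \ {I, J}, lam k ^ 2 :=
    Finset.sum_nonneg fun k _ => sq_nonneg _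
  -- column relation
  by_cases hA : ∃ j1 j2 j3 : Fin m,
      ¬((∀ x, E x j1 = E x j2) ∨ (∀ x, E x j1 = - E x j2)) ∧
      ¬((∀ x, E x j1 = E x j3) ∨ (∀ x, E x j1 = - E x j3)) ∧
      ¬((∀ x, E x j2 = E x j3) ∨ (∀ x, E x j2 = - E x j3))
  · -- CASE A : Q ≥ 1
    obtain ⟨j1, j2, j3, h12, h13, h23⟩ := hA
    have hj12 : j1 ≠ j2 := by rintro rfl; exact h12 (Or.inl fun x => rfl)
    have hj13 : j1 ≠ j3 := by rintro rfl; exact h13 (Or.inl fun x => rfl)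
    have hj23 : j2 ≠ j3 := by rintro rfl; exact h23 (Or.inl fun x => rfl)
    obtain ⟨x1, x2, x3, hd12, hd13, hd23⟩ :=
      pattern_triple hm0 (fun x => E x j1) (fun x => E x j2) (fun x => E x j3)
        (fun x => hpm x j1) (fun x => hpm x j2) (fun x => hpm x j3) h12 h13 h23
    have hx12 : x1 ≠ x2 := by rintro rfl; exact hd12 ⟨rfl, rfl⟩
    have hx13 : x1 ≠ x3 := by rintro rfl; exact hd13 ⟨rfl, rfl⟩
    have hx23 : x2 ≠ x3 := by rintro rfl; exact hd23 ⟨rfl, rfl⟩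
    obtain ⟨β, hβne, hrI, hrJ⟩ := exists_ker3
      (fun t => U (![j1, j2, j3] t) I) (fun t => U (![j1, j2, j3] t) J)
    rw [Fin.sum_univ_three] at hrI hrJ
    simp only [Matrix.cons_val_zero, Matrix.cons_val_one, Matrix.head_cons,
      Matrix.cons_val_two, Matrix.tail_cons] at hrI hrJ
    set b1 : ℝ := β 0 with hb1
    set b2 : ℝ := β 1 with hb2
    set b3 : ℝ := β 2 with hb3
    set v : Fin m → ℝ := fun j => if j = j1 then b1 else if j = j2 then b2 else
      if j = j3 then b3 else 0 with hv
    have hvj1 : v j1 = b1 := by simp [hv]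
    have hvj2 : v j2 = b2 := by simp [hv, Ne.symm hj12]
    have hvj3 : v j3 = b3 := by simp [hv, Ne.symm hj13, Ne.symm hj23]
    have hvz : ∀ x, x ≠ j1 → x ≠ j2 → x ≠ j3 → v x = 0 := by
      intro x h1 h2 h3; simp [hv, h1, h2, h3]
    set B : ℝ := b1^2 + b2^2 + b3^2 with hB
    have hvnorm : ∑ x, v x ^ 2 = B := by
      rw [sum_three_support hj12 hj13 hj23 (fun x => v x ^ 2)
        (fun x h1 h2 h3 => by simp [hvz x h1 h2 h3])]
      simp only [hvj1, hvj2, hvj3, hB]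
    have hBpos : 0 < B := by
      rcases lt_or_ge 0 B with h | h
      · exact h
      · exfalso
        have hZ : ∀ u : ℝ, u^2 ≤ 0 → u = 0 := fun u hu =>
          pow_eq_zero_iff (n := 2) (by norm_num) |>.mp (le_antisymm hu (sq_nonneg u))
        have h0 : b1 = 0 := hZ b1 (by nlinarith [sq_nonneg b2, sq_nonneg b3])
        have h1 : b2 = 0 := hZ b2 (by nlinarith [sq_nonneg b1, sq_nonneg b3])
        have h2 : b3 = 0 := hZ b3 (by nlinarith [sq_nonneg b1, sq_nonneg b2])
        refine hβne (funext fun t => ?_)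
        have e0 : β 0 = 0 := by rw [← hb1]; exact h0
        have e1 : β 1 = 0 := by rw [← hb2]; exact h1
        have e2 : β 2 = 0 := by rw [← hb3]; exact h2
        fin_cases t
        · exact e0
        · exact e1
        · exact e2
    have hwI : wcoord U v I = 0 := by
      rw [wcoord, sum_three_support hj12 hj13 hj23 (fun x => U x I * v x)
        (fun x h1 h2 h3 => by simp [hvz x h1 h2 h3])]
      simp only [hvj1, hvj2, hvj3]
      linarith [hrI]
    have hwJ : wcoord U v J = 0 := by
      rw [wcoord, sum_three_support hj12 hj13 hj23 (fun x => U x J * v x)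
        (fun x h1 h2 h3 => by simp [hvz x h1 h2 h3])]
      simp only [hvj1, hvj2, hvj3]
      linarith [hrJ]
    have hEvx : ∀ x, ∑ j, E x j * v j = E x j1 * b1 + E x j2 * b2 + E x j3 * b3 := by
      intro x
      rw [sum_three_support hj12 hj13 hj23 (fun j => E x j * v j)
        (fun j h1 h2 h3 => by simp [hvz j h1 h2 h3])]
      simp only [hvj1, hvj2, hvj3]
    -- lower bound for ‖Ev‖²
    have hlow : B ≤ ∑ x, (∑ j, E x j * v j) ^ 2 := by
      have hterm : ∀ x, (∑ j, E x j * v j)^2 =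
          (b1 + (E x j1 * E x j2) * b2 + (E x j1 * E x j3) * b3)^2 := by
        intro x
        rw [hEvx x]
        rcases hpm x j1 with e | e <;> rw [e] <;> ring
      have hsos := sos3 (b1 := b1) (b2 := b2) (b3 := b3)
        (pm_mul (hpm x1 j1) (hpm x1 j2)) (pm_mul (hpm x1 j1) (hpm x1 j3))
        (pm_mul (hpm x2 j1) (hpm x2 j2)) (pm_mul (hpm x2 j1) (hpm x2 j3))
        (pm_mul (hpm x3 j1) (hpm x3 j2)) (pm_mul (hpm x3 j1) (hpm x3 j3))
        hd12 hd13 hd23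
      have hval : ∑ x ∈ ({x1, x2, x3} : Finset (Fin m)), (∑ j, E x j * v j) ^ 2 =
          (∑ j, E x1 j * v j)^2 + (∑ j, E x2 j * v j)^2 + (∑ j, E x3 j * v j)^2 := by
        rw [Finset.sum_insert (by simp [hx12, hx13]), Finset.sum_insert (by simp [hx23]),
          Finset.sum_singleton]
        ring
      calc B ≤ _ := hsos
        _ = ∑ x ∈ ({x1, x2, x3} : Finset (Fin m)), (∑ j, E x j * v j) ^ 2 := by
            rw [hval, hterm x1, hterm x2, hterm x3]
        _ ≤ ∑ x, (∑ j, E x j * v j) ^ 2 :=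
            Finset.sum_le_sum_of_subset_of_nonneg (Finset.subset_univ _)
              (fun x _ _ => sq_nonneg _)
    -- upper bound for ‖Ev‖²
    have hup : ∑ x, (∑ j, E x j * v j) ^ 2 ≤ (∑ k ∈ Finset.univ \ {I, J}, lam k ^ 2) * B := by
      rw [normEv hcol hent v]
      have hwnorm : ∑ k, wcoord U v k ^ 2 = B := by rw [norm_w hrow v, hvnorm]
      have hwk : ∀ k, wcoord U v k ^ 2 ≤ B := by
        intro k
        rw [← hwnorm]
        exact Finset.single_le_sum (f := fun t => wcoord U v t ^ 2)
          (fun t _ => sq_nonneg _) (Finset.mem_univ k)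
      have hsubIJ : ({I, J} : Finset (Fin m)) ⊆ Finset.univ := Finset.subset_univ _
      have hdecomp := Finset.sum_sdiff (f := fun k => lam k ^2 * wcoord U v k ^ 2) hsubIJ
      rw [Finset.sum_pair hIJ] at hdecomp
      calc ∑ k, lam k ^ 2 * wcoord U v k ^ 2
          = ∑ k ∈ Finset.univ \ {I, J}, lam k ^2 * wcoord U v k ^ 2 := by
            rw [← hdecomp, hwI, hwJ]; ring
        _ ≤ ∑ k ∈ Finset.univ \ {I, J}, lam k ^2 * B := by
            refine Finset.sum_le_sum fun k _ => ?_
            exact mul_le_mul_of_nonneg_left (hwk k) (sq_nonneg _)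
        _ = (∑ k ∈ Finset.univ \ {I, J}, lam k ^ 2) * B := by rw [Finset.sum_mul]
    have hQ1 : (1:ℝ) ≤ ∑ k ∈ Finset.univ \ {I, J}, lam k ^ 2 := by
      nlinarith [le_trans hlow hup, hBpos]
    nlinarith [hsplit, hQ1, sq_nonneg (lam I + lam J), sq_nonneg (lam I - lam J)]
  · -- CASE B : columns in at most two ±-classes
    have hBjkl : ∀ j k l : Fin m,
        ((∀ x, E x j = E x k) ∨ (∀ x, E x j = - E x k)) ∨
        ((∀ x, E x j = E x l) ∨ (∀ x, E x j = - E x l)) ∨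
        ((∀ x, E x k = E x l) ∨ (∀ x, E x k = - E x l)) := by
      intro j k l
      by_contra hc
      push_neg at hc
      obtain ⟨h1, h2, h3⟩ := hc
      refine hA ⟨j, k, l, ?_, ?_, ?_⟩
      · rw [not_or]
        constructor
        · intro hh; obtain ⟨x, hx⟩ := h1.1; exact hx (hh x)
        · intro hh; obtain ⟨x, hx⟩ := h1.2; exact hx (hh x)
      · rw [not_or]
        constructor
        · intro hh; obtain ⟨x, hx⟩ := h2.1; exact hx (hh x)
        · intro hh; obtain ⟨x, hx⟩ := h2.2; exact hx (hh x)
      · rw [not_or]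
        constructor
        · intro hh; obtain ⟨x, hx⟩ := h3.1; exact hx (hh x)
        · intro hh; obtain ⟨x, hx⟩ := h3.2; exact hx (hh x)
    obtain ⟨c, d, hcd⟩ : ∃ c d : Fin m → ℝ, ∀ j, (∀ x, E x j = c x) ∨ (∀ x, E x j = - c x) ∨
        (∀ x, E x j = d x) ∨ (∀ x, E x j = - d x) := by
      by_cases h0 : ∀ k, (∀ x, E x ⟨0, hm0⟩ = E x k) ∨ (∀ x, E x ⟨0, hm0⟩ = - E x k)
      · refine ⟨fun x => E x ⟨0, hm0⟩, fun x => E x ⟨0, hm0⟩, fun j => ?_⟩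
        rcases h0 j with h | h
        · exact Or.inl (fun x => (h x).symm)
        · exact Or.inr (Or.inl (fun x => by have := h x; linarith))
      · obtain ⟨k0, hk0⟩ := not_forall.mp h0
        refine ⟨fun x => E x ⟨0, hm0⟩, fun x => E x k0, fun j => ?_⟩
        rcases hBjkl ⟨0, hm0⟩ k0 j with h | h | h
        · exact absurd h hk0
        · rcases h with h | h
          · exact Or.inl fun x => (h x).symm
          · exact Or.inr (Or.inl fun x => by have := h x; linarith)
        · rcases h with h | h
          · exact Or.inr (Or.inr (Or.inl fun x => (h x).symm))
          · exact Or.inr (Or.inr (Or.inr fun x => by have := h x; linarith))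
    by_cases hmid : ∀ k, k ≠ I → k ≠ J → lam k = 0
    · -- all middle eigenvalues vanish: trace argument
      have hsub : ({I, J} : Finset (Fin m)) ⊆ Finset.univ := Finset.subset_univ _
      have hQ0 : ∑ k ∈ Finset.univ \ {I, J}, lam k ^ 2 = 0 := by
        refine Finset.sum_eq_zero fun k hk => ?_
        simp only [Finset.mem_sdiff, Finset.mem_insert, Finset.mem_singleton, not_or] at hk
        rw [hmid k hk.2.1 hk.2.2]; ring
      have hsumsq : lam I ^ 2 + lam J ^ 2 = (m:ℝ)^2 := by rw [hQ0] at hsplit; linarith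
      have hsum1 : lam I + lam J = ∑ k, lam k := by
        have hd := Finset.sum_sdiff (f := lam) hsub
        rw [Finset.sum_pair hIJ] at hd
        have hz : ∑ k ∈ Finset.univ \ {I, J}, lam k = 0 :=
          Finset.sum_eq_zero fun k hk => by
            simp only [Finset.mem_sdiff, Finset.mem_insert, Finset.mem_singleton, not_or] at hk
            exact hmid k hk.2.1 hk.2.2
        linarith [hd, hz]
      have htr : ∑ k, lam k = ∑ i, E i i := trace_eig hcol hent
      set S : Finset (Fin m) := Finset.univ.filter (fun i => E i i = 1) with hS
      have hcardle : S.card ≤ m := by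
        calc S.card ≤ Finset.univ.card := Finset.card_le_card (Finset.filter_subset _ _)
          _ = m := by simp
      have htr2 : ∑ i, E i i = 2*(S.card : ℝ) - m := by
        have hd := Finset.sum_sdiff (f := fun i => E i i) (Finset.filter_subset
          (fun i => E i i = 1) Finset.univ)
        have h1 : ∑ i ∈ S, E i i = (S.card : ℝ) := by
          rw [Finset.sum_congr rfl (fun i hi => (Finset.mem_filter.mp hi).2)]
          simp [hS]
        have h2 : ∑ i ∈ Finset.univ \ S, E i i = -(((Finset.univ \ S).card : ℝ)) := by
          have hval : ∀ i ∈ Finset.univ \ S, E i i = -1 := by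
            intro i hi
            simp only [hS, Finset.mem_sdiff, Finset.mem_filter, Finset.mem_univ,
              true_and] at hi
            rcases hpm i i with h | h
            · exact absurd h hi
            · exact h
          rw [Finset.sum_congr rfl hval, Finset.sum_const]
          simp
        have hcard : ((Finset.univ \ S).card : ℝ) = (m : ℝ) - S.card := by
          rw [Finset.card_sdiff_of_subset (Finset.filter_subset _ _), Finset.card_univ,
            Fintype.card_fin, Nat.cast_sub hcardle]
        have : ∑ i ∈ Finset.univ \ S, E i i + ∑ i ∈ S, E i i = ∑ i, E i i := hd
        rw [h1, h2, hcard] at this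
        linarith
      have hne0 : (2 * (S.card:ℤ) - m) ≠ 0 := by
        obtain ⟨n, hn⟩ := hodd
        omega
      have ht2 : (1:ℤ) ≤ (2 * (S.card:ℤ) - m)^2 := by
        have h1 := Int.one_le_abs hne0
        nlinarith [abs_nonneg (2 * (S.card:ℤ) - m), abs_mul_abs_self (2 * (S.card:ℤ) - m)]
      have ht2R : (1:ℝ) ≤ (2*(S.card:ℝ) - m)^2 := by exact_mod_cast ht2
      have hteq : lam I + lam J = 2*(S.card:ℝ) - m := by rw [hsum1, htr, htr2]
      nlinarith [hsumsq, hteq, ht2R]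
    · -- some middle eigenvalue nonzero: extreme eigenvalue vanishes
      push_neg at hmid
      obtain ⟨k0, hk0I, hk0J, hk0⟩ := hmid
      have hzero : lam I = 0 ∨ lam J = 0 := by
        by_contra hz
        push_neg at hz
        obtain ⟨hlamI, hlamJ⟩ := hz
        have hform : ∀ j : Fin m, ∃ p q : ℝ, ∀ i, E i j = p * c i + q * d i := by
          intro j
          rcases hcd j with h | h | h | h
          · exact ⟨1, 0, fun i => by rw [h i]; ring⟩
          · exact ⟨-1, 0, fun i => by rw [h i]; ring⟩
          · exact ⟨0, 1, fun i => by rw [h i]; ring⟩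
          · exact ⟨0, -1, fun i => by rw [h i]; ring⟩
        choose P Q hPQ using hform
        have hcolspan : ∀ t : Fin m, lam t ≠ 0 → ∃ p q : ℝ, ∀ i, U i t = p * c i + q * d i := by
          intro t ht
          refine ⟨(∑ j, P j * U j t)/lam t, (∑ j, Q j * U j t)/lam t, fun i => ?_⟩
          have he := eigcol hcol hent t i
          have hexp : ∑ j, E i j * U j t =
              c i * (∑ j, P j * U j t) + d i * (∑ j, Q j * U j t) := by
            rw [Finset.mul_sum, Finset.mul_sum, ← Finset.sum_add_distrib]
            refine Finset.sum_congr rfl fun j _ => ?_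
            rw [hPQ j i]; ring
          rw [hexp] at he
          field_simp
          linarith [he]
        obtain ⟨p1, q1, hx⟩ := hcolspan I hlamI
        obtain ⟨p2, q2, hy⟩ := hcolspan J hlamJ
        obtain ⟨p3, q3, hu⟩ := hcolspan k0 hk0
        have hXX : ∑ i, U i I * U i I = 1 := by rw [hcol I I, if_pos rfl]
        have hYY : ∑ i, U i J * U i J = 1 := by rw [hcol J J, if_pos rfl]
        have hKK : ∑ i, U i k0 * U i k0 = 1 := by rw [hcol k0 k0, if_pos rfl]
        have hXY : ∑ i, U i I * U i J = 0 := by rw [hcol I J, if_neg hIJ]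
        have hXK : ∑ i, U i I * U i k0 = 0 := by
          rw [hcol I k0, if_neg (fun h => hk0I h.symm)]
        have hYK : ∑ i, U i J * U i k0 = 0 := by
          rw [hcol J k0, if_neg (fun h => hk0J h.symm)]
        by_cases hdet : p1 * q2 - p2 * q1 = 0
        · have hxne : ¬(p1 = 0 ∧ q1 = 0) := by
            rintro ⟨hp, hq⟩
            have hzz : ∀ i, U i I = 0 := fun i => by rw [hx i, hp, hq]; ring
            have h0 : ∑ i, U i I * U i I = 0 :=
              Finset.sum_eq_zero fun i _ => by rw [hzz i]; ring
            rw [hXX] at h0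
            exact one_ne_zero h0
          rcases not_and_or.mp hxne with hp1 | hq1
          · have hcomb : ∀ i, p2 * U i I - p1 * U i J = 0 := by
              intro i; rw [hx i, hy i]; linear_combination (-(d i)) * hdet
            have h0 : ∑ i, (p2 * U i I - p1 * U i J) * U i J = 0 :=
              Finset.sum_eq_zero fun i _ => by rw [hcomb i]; ring
            have hexp : ∑ i, (p2 * U i I - p1 * U i J) * U i J
                = p2 * (∑ i, U i I * U i J) - p1 * (∑ i, U i J * U i J) := by
              rw [Finset.mul_sum, Finset.mul_sum, ← Finset.sum_sub_distrib]
              exact Finset.sum_congr rfl fun i _ => by ring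
            rw [hexp, hXY, hYY] at h0
            exact hp1 (by linarith)
          · have hcomb : ∀ i, q2 * U i I - q1 * U i J = 0 := by
              intro i; rw [hx i, hy i]; linear_combination (c i) * hdet
            have h0 : ∑ i, (q2 * U i I - q1 * U i J) * U i J = 0 :=
              Finset.sum_eq_zero fun i _ => by rw [hcomb i]; ring
            have hexp : ∑ i, (q2 * U i I - q1 * U i J) * U i J
                = q2 * (∑ i, U i I * U i J) - q1 * (∑ i, U i J * U i J) := by
              rw [Finset.mul_sum, Finset.mul_sum, ← Finset.sum_sub_distrib]
              exact Finset.sum_congr rfl fun i _ => by ring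
            rw [hexp, hXY, hYY] at h0
            exact hq1 (by linarith)
        · set Av : ℝ := (p3*q2 - q3*p2)/(p1*q2 - p2*q1) with hAv
          set Bv : ℝ := (p1*q3 - q1*p3)/(p1*q2 - p2*q1) with hBv
          have hu2 : ∀ i, U i k0 = Av * U i I + Bv * U i J := by
            intro i
            rw [hx i, hy i, hu i, hAv, hBv]
            rw [div_mul_eq_mul_div, div_mul_eq_mul_div, ← add_div, eq_div_iff hdet]
            ring
          have hαeq : ∑ i, U i I * U i k0
              = Av * (∑ i, U i I * U i I) + Bv * (∑ i, U i I * U i J) := by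
            rw [Finset.mul_sum, Finset.mul_sum, ← Finset.sum_add_distrib]
            exact Finset.sum_congr rfl fun i _ => by rw [hu2 i]; ring
          have hβeq : ∑ i, U i J * U i k0
              = Av * (∑ i, U i J * U i I) + Bv * (∑ i, U i J * U i J) := by
            rw [Finset.mul_sum, Finset.mul_sum, ← Finset.sum_add_distrib]
            exact Finset.sum_congr rfl fun i _ => by rw [hu2 i]; ring
          have hYX : ∑ i, U i J * U i I = 0 := by
            rw [← hXY]
            exact Finset.sum_congr rfl fun i _ => by ring
          rw [hXK, hXX, hXY] at hαeq
          rw [hYK, hYX, hYY] at hβeq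
          have hA0 : Av = 0 := by linarith
          have hB0 : Bv = 0 := by linarith
          have hzz : ∀ i, U i k0 = 0 := fun i => by rw [hu2 i, hA0, hB0]; ring
          have h0 : ∑ i, U i k0 * U i k0 = 0 :=
            Finset.sum_eq_zero fun i _ => by rw [hzz i]; ring
          rw [hKK] at h0
          exact one_ne_zero h0
      have hbound : (lam I - lam J)^2 ≤ (m:ℝ)^2 := by
        rcases hzero with h | h <;> rw [h] <;> nlinarith [hsplit, hQnonneg]
      nlinarith [hm1]

lemma quad_le_max
    (hcol : ∀ i j, ∑ x, U x i * U x j = if i = j then (1:ℝ) else 0)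
    (hrow : ∀ x y, ∑ i, U x i * U y i = if x = y then (1:ℝ) else 0)
    (hent : ∀ i j, E i j = ∑ k, U i k * lam k * U j k)
    {I : Fin m} (hI : ∀ k, lam k ≤ lam I)
    (v : Fin m → ℝ) (hv : ∑ x, v x ^ 2 = 1) :
    ∑ i, ∑ j, v i * E i j * v j ≤ lam I := by
  rw [quad_eq hent v]
  calc ∑ k, lam k * wcoord U v k ^ 2 ≤ ∑ k, lam I * wcoord U v k ^ 2 :=
        Finset.sum_le_sum fun k _ => mul_le_mul_of_nonneg_right (hI k) (sq_nonneg _)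
    _ = lam I * ∑ k, wcoord U v k ^ 2 := by rw [Finset.mul_sum]
    _ = lam I := by rw [norm_w hrow v, hv, mul_one]

lemma quad_ge_min
    (hcol : ∀ i j, ∑ x, U x i * U x j = if i = j then (1:ℝ) else 0)
    (hrow : ∀ x y, ∑ i, U x i * U y i = if x = y then (1:ℝ) else 0)
    (hent : ∀ i j, E i j = ∑ k, U i k * lam k * U j k)
    {J : Fin m} (hJ : ∀ k, lam J ≤ lam k)
    (v : Fin m → ℝ) (hv : ∑ x, v x ^ 2 = 1) :
    lam J ≤ ∑ i, ∑ j, v i * E i j * v j := by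
  rw [quad_eq hent v]
  calc lam J = lam J * ∑ k, wcoord U v k ^ 2 := by rw [norm_w hrow v, hv, mul_one]
    _ = ∑ k, lam J * wcoord U v k ^ 2 := by rw [Finset.mul_sum]
    _ ≤ ∑ k, lam k * wcoord U v k ^ 2 :=
        Finset.sum_le_sum fun k _ => mul_le_mul_of_nonneg_right (hJ k) (sq_nonneg _)

lemma spread_sq_le_two_sum (f : Fin m → ℝ) (I J : Fin m) :
    (f I - f J)^2 ≤ 2 * ∑ k, f k ^ 2 := by
  have hnn : (0:ℝ) ≤ ∑ k, f k ^ 2 := Finset.sum_nonneg fun k _ => sq_nonneg _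
  by_cases h : I = J
  · subst h; simp only [sub_self]; nlinarith
  · have hsub : ({I, J} : Finset (Fin m)) ⊆ Finset.univ := Finset.subset_univ _
    have hd := Finset.sum_sdiff (f := fun k => f k ^ 2) hsub
    rw [Finset.sum_pair h] at hd
    have hnn2 : (0:ℝ) ≤ ∑ k ∈ Finset.univ \ {I, J}, f k ^ 2 :=
      Finset.sum_nonneg fun k _ => sq_nonneg _
    nlinarith [sq_nonneg (f I + f J)]

end ZhanAux

open ZhanAux Matrix Finset in
/-- Zhan's theorem (2005): for `m ≥ 2`, `a > 0`, and a real symmetric `m × m` matrix `A`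
with entries in `[-a, a]`, the spread of `A` is at most `a √(2m²)` if `m` is even and
at most `a √(2m² - 1)` if `m` is odd. -/
theorem zhan_spread_bound (m : ℕ) (hm : 2 ≤ m) (a : ℝ) (ha : 0 < a)
    (A : Matrix (Fin m) (Fin m) ℝ) (hA : A.IsHermitian)
    (hentries : ∀ i j, A i j ∈ Set.Icc (-a) a) :
    (Even m →
        (⨆ i, hA.eigenvalues i) - (⨅ i, hA.eigenvalues i) ≤
          a * Real.sqrt (2 * (m : ℝ) ^ 2)) ∧
      (Odd m →
        (⨆ i, hA.eigenvalues i) - (⨅ i, hA.eigenvalues i) ≤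
          a * Real.sqrt (2 * (m : ℝ) ^ 2 - 1)) := by
  have hmpos : 0 < m := by omega
  have : Nonempty (Fin m) := ⟨⟨0, hmpos⟩⟩
  have hm1 : (1:ℝ) ≤ (m:ℝ) := by exact_mod_cast (by omega : 1 ≤ m)
  obtain ⟨I, hI⟩ := Finite.exists_max hA.eigenvalues
  obtain ⟨J, hJ⟩ := Finite.exists_min hA.eigenvalues
  have hsup : (⨆ i, hA.eigenvalues i) = hA.eigenvalues I :=
    le_antisymm (ciSup_le hI) (le_ciSup (Set.Finite.bddAbove (Set.finite_range _)) I)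
  have hinf : (⨅ i, hA.eigenvalues i) = hA.eigenvalues J :=
    le_antisymm (ciInf_le (Set.Finite.bddBelow (Set.finite_range _)) J) (le_ciInf hJ)
  rw [hsup, hinf]
  have hspreadnn : 0 ≤ hA.eigenvalues I - hA.eigenvalues J := by linarith [hI J]
  obtain ⟨UA, hcolA, hrowA, hentA⟩ := herm_package A hA
  have hAsq : ∀ i j : Fin m, (A i j)^2 ≤ a^2 := by
    intro i j
    obtain ⟨h1, h2⟩ := hentries i j
    nlinarith
  have hsumA : ∑ k, hA.eigenvalues k ^ 2 ≤ (m:ℝ)^2 * a^2 := by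
    rw [sum_sq_eig hcolA hentA]
    calc ∑ i, ∑ j, (A i j)^2 ≤ ∑ _i : Fin m, ∑ _j : Fin m, a^2 :=
          Finset.sum_le_sum fun i _ => Finset.sum_le_sum fun j _ => hAsq i j
      _ = (m:ℝ)^2 * a^2 := by
          simp only [Finset.sum_const, Finset.card_univ, Fintype.card_fin, nsmul_eq_mul]
          push_cast; ring
  constructor
  · -- EVEN case
    intro _
    have hkey : (hA.eigenvalues I - hA.eigenvalues J)^2 ≤ a^2 * (2*(m:ℝ)^2) := by
      have := spread_sq_le_two_sum hA.eigenvalues I J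
      nlinarith
    calc hA.eigenvalues I - hA.eigenvalues J
        = Real.sqrt ((hA.eigenvalues I - hA.eigenvalues J)^2) :=
          (Real.sqrt_sq hspreadnn).symm
      _ ≤ Real.sqrt (a^2 * (2*(m:ℝ)^2)) := Real.sqrt_le_sqrt hkey
      _ = a * Real.sqrt (2*(m:ℝ)^2) := by
          rw [Real.sqrt_mul (sq_nonneg a), Real.sqrt_sq ha.le]
  · -- ODD case
    intro hodd
    have hm3 : 3 ≤ m := by
      obtain ⟨n, hn⟩ := hodd; omega
    by_cases hIJ : I = J
    · subst hIJ
      simp only [sub_self]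
      have h1 : (1:ℝ) ≤ 2*(m:ℝ)^2 - 1 := by nlinarith
      positivity
    -- eigenvector columns
    set x : Fin m → ℝ := fun i => UA i I with hxdef
    set y : Fin m → ℝ := fun i => UA i J with hydef
    have hxx : ∑ i, x i * x i = 1 := by rw [hxdef]; rw [hcolA I I, if_pos rfl]
    have hyy : ∑ i, y i * y i = 1 := by rw [hydef]; rw [hcolA J J, if_pos rfl]
    have hxsq : ∑ i, x i ^ 2 = 1 := by
      rw [← hxx]; exact Finset.sum_congr rfl fun i _ => sq (x i) ▸ by ring
    have hysq : ∑ i, y i ^ 2 = 1 := by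
      rw [← hyy]; exact Finset.sum_congr rfl fun i _ => by ring
    -- Rayleigh identities for A
    have hRx : ∑ i, ∑ j, A i j * (x i * x j) = hA.eigenvalues I := by
      calc ∑ i, ∑ j, A i j * (x i * x j) = ∑ i, x i * ∑ j, A i j * UA j I := by
            refine Finset.sum_congr rfl fun i _ => ?_
            rw [Finset.mul_sum]
            exact Finset.sum_congr rfl fun j _ => by rw [hxdef]; ring
        _ = ∑ i, x i * (hA.eigenvalues I * UA i I) := by
            exact Finset.sum_congr rfl fun i _ => by rw [eigcol hcolA hentA I i]
        _ = hA.eigenvalues I * ∑ i, x i * x i := by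
            rw [Finset.mul_sum]
            exact Finset.sum_congr rfl fun i _ => by rw [hxdef]; ring
        _ = hA.eigenvalues I := by rw [hxx, mul_one]
    have hRy : ∑ i, ∑ j, A i j * (y i * y j) = hA.eigenvalues J := by
      calc ∑ i, ∑ j, A i j * (y i * y j) = ∑ i, y i * ∑ j, A i j * UA j J := by
            refine Finset.sum_congr rfl fun i _ => ?_
            rw [Finset.mul_sum]
            exact Finset.sum_congr rfl fun j _ => by rw [hydef]; ring
        _ = ∑ i, y i * (hA.eigenvalues J * UA i J) := by
            exact Finset.sum_congr rfl fun i _ => by rw [eigcol hcolA hentA J i]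
        _ = hA.eigenvalues J * ∑ i, y i * y i := by
            rw [Finset.mul_sum]
            exact Finset.sum_congr rfl fun i _ => by rw [hydef]; ring
        _ = hA.eigenvalues J := by rw [hyy, mul_one]
    -- the sign matrix
    set E : Matrix (Fin m) (Fin m) ℝ :=
      Matrix.of fun i j => if 0 ≤ x i * x j - y i * y j then (1:ℝ) else -1 with hEdef
    have hEij : ∀ i j, E i j = if 0 ≤ x i * x j - y i * y j then (1:ℝ) else -1 :=
      fun i j => rfl
    have hpmE : ∀ i j, E i j = 1 ∨ E i j = -1 := by
      intro i j
      rw [hEij]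
      split_ifs with h
      · exact Or.inl rfl
      · exact Or.inr rfl
    have hEsym : E.IsHermitian := by
      rw [Matrix.IsHermitian]
      ext i j
      rw [Matrix.conjTranspose_apply, hEij, hEij]
      have hzz : x j * x i - y j * y i = x i * x j - y i * y j := by ring
      rw [star_trivial, hzz]
    -- pointwise bound
    have hpoint : ∀ i j, A i j * (x i * x j - y i * y j) ≤
        a * (E i j * (x i * x j - y i * y j)) := by
      intro i j
      obtain ⟨h1, h2⟩ := hentries i j
      rw [hEij]
      split_ifs with h
      · nlinarith
      · push_neg at h
        nlinarith
    -- assemble the chain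
    have hchain1 : hA.eigenvalues I - hA.eigenvalues J =
        ∑ i, ∑ j, A i j * (x i * x j - y i * y j) := by
      rw [← hRx, ← hRy, ← Finset.sum_sub_distrib]
      refine Finset.sum_congr rfl fun i _ => ?_
      rw [← Finset.sum_sub_distrib]
      exact Finset.sum_congr rfl fun j _ => by ring
    have hchain2 : ∑ i, ∑ j, A i j * (x i * x j - y i * y j) ≤
        a * ∑ i, ∑ j, E i j * (x i * x j - y i * y j) := by
      rw [Finset.mul_sum]
      refine Finset.sum_le_sum fun i _ => ?_
      rw [Finset.mul_sum]
      exact Finset.sum_le_sum fun j _ => hpoint i j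
    -- the quadratic form of E
    obtain ⟨IE, hIE⟩ := Finite.exists_max hEsym.eigenvalues
    obtain ⟨JE, hJE⟩ := Finite.exists_min hEsym.eigenvalues
    obtain ⟨UE, hcolE, hrowE, hentE⟩ := herm_package E hEsym
    have hchain3 : ∑ i, ∑ j, E i j * (x i * x j - y i * y j) ≤
        hEsym.eigenvalues IE - hEsym.eigenvalues JE := by
      have hsplitEq : ∑ i, ∑ j, E i j * (x i * x j - y i * y j) =
          (∑ i, ∑ j, x i * E i j * x j) - (∑ i, ∑ j, y i * E i j * y j) := by
        rw [← Finset.sum_sub_distrib]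
        refine Finset.sum_congr rfl fun i _ => ?_
        rw [← Finset.sum_sub_distrib]
        exact Finset.sum_congr rfl fun j _ => by ring
      rw [hsplitEq]
      have h1 := quad_le_max hcolE hrowE hentE hIE x hxsq
      have h2 := quad_ge_min hcolE hrowE hentE hJE y hysq
      linarith
    -- discrete bound
    have hdisc := sign_spread_sq hm3 hodd hEsym hpmE hIE hJE
    have hEspreadnn : 0 ≤ hEsym.eigenvalues IE - hEsym.eigenvalues JE := by
      linarith [hIE JE]
    have hEspread : hEsym.eigenvalues IE - hEsym.eigenvalues JE ≤
        Real.sqrt (2*(m:ℝ)^2 - 1) := by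
      calc hEsym.eigenvalues IE - hEsym.eigenvalues JE
          = Real.sqrt ((hEsym.eigenvalues IE - hEsym.eigenvalues JE)^2) :=
            (Real.sqrt_sq hEspreadnn).symm
        _ ≤ Real.sqrt (2*(m:ℝ)^2 - 1) := Real.sqrt_le_sqrt hdisc
    calc hA.eigenvalues I - hA.eigenvalues J
        ≤ a * ∑ i, ∑ j, E i j * (x i * x j - y i * y j) := by rw [hchain1]; exact hchain2
      _ ≤ a * (hEsym.eigenvalues IE - hEsym.eigenvalues JE) :=
          mul_le_mul_of_nonneg_left hchain3 ha.le
      _ ≤ a * Real.sqrt (2*(m:ℝ)^2 - 1) :=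
          mul_le_mul_of_nonneg_left hEspread ha.le
end

section
/- Let m = 3q with q ≥ 1, and let B be the m×m symmetric block matrix with the top-left q×q block all zeros and all other entries equal to 1. Then B has rank 2 and spread(B) = 2√3·q. -/
open Matrix

lemma my_trace_eq_sum_eigenvalues {n : Type*} [Fintype n] [DecidableEq n]
    {A : Matrix n n ℝ} (hA : A.IsHermitian) :
    A.trace = ∑ i, hA.eigenvalues i := by
  have hU' : star (hA.eigenvectorUnitary : Matrix n n ℝ) * (hA.eigenvectorUnitary : Matrix n n ℝ)
      = 1 := Matrix.mem_unitaryGroup_iff'.mp hA.eigenvectorUnitary.2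
  conv_lhs => rw [hA.spectral_theorem, Unitary.conjStarAlgAut_apply]
  rw [Matrix.trace_mul_cycle, hU', one_mul, Matrix.trace_diagonal]
  simp

lemma my_trace_sq_eq_sum_sq {n : Type*} [Fintype n] [DecidableEq n]
    {A : Matrix n n ℝ} (hA : A.IsHermitian) :
    (A * A).trace = ∑ i, hA.eigenvalues i ^ 2 := by
  have hU' : star (hA.eigenvectorUnitary : Matrix n n ℝ) * (hA.eigenvectorUnitary : Matrix n n ℝ)
      = 1 := Matrix.mem_unitaryGroup_iff'.mp hA.eigenvectorUnitary.2
  set U := (hA.eigenvectorUnitary : Matrix n n ℝ) with hUdef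
  set D := Matrix.diagonal ((RCLike.ofReal : ℝ → ℝ) ∘ hA.eigenvalues) with hDdef
  have h1 : A * A = U * D * D * star U := by
    conv_lhs => rw [hA.spectral_theorem, Unitary.conjStarAlgAut_apply]
    simp only [← hUdef, ← hDdef]
    rw [Matrix.mul_assoc (U * D) (star U) (U * D * star U),
      ← Matrix.mul_assoc (star U) (U * D) (star U), ← Matrix.mul_assoc (star U) U D, hU',
      one_mul, ← Matrix.mul_assoc]
  rw [h1, Matrix.trace_mul_cycle, ← Matrix.mul_assoc, hU', one_mul, hDdef,
    Matrix.diagonal_mul_diagonal, Matrix.trace_diagonal]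
  simp [sq]

lemma my_sum_ite (q m : ℕ) (h : q ≤ m) (c d : ℝ) :
    ∑ i ∈ Finset.range m, (if i < q then c else d) = q * c + (m - q : ℕ) * d := by
  rw [Finset.range_eq_Ico, ← Finset.sum_Ico_consecutive _ (Nat.zero_le q) h]
  have h1 : ∑ i ∈ Finset.Ico 0 q, (if i < q then c else d) = q * c := by
    rw [Finset.sum_congr rfl (fun i hi => if_pos (Finset.mem_Ico.mp hi).2), Finset.sum_const,
      Nat.card_Ico, Nat.sub_zero, nsmul_eq_mul]
  have h2 : ∑ i ∈ Finset.Ico q m, (if i < q then c else d) = (m - q : ℕ) * d := by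
    rw [Finset.sum_congr rfl (fun i hi => if_neg (Nat.not_lt.mpr (Finset.mem_Ico.mp hi).1)),
      Finset.sum_const, Nat.card_Ico, nsmul_eq_mul]
  rw [h1, h2]

set_option maxHeartbeats 1000000 in
/-- For `m = 3q`, the symmetric `m × m` matrix `B` with a `q × q` zero top-left block and
all other entries `1` has rank `2` and spread `2√3 · q`. -/
theorem block_matrix_rank_and_spread (q : ℕ) (hq : 1 ≤ q)
    (B : Matrix (Fin (3 * q)) (Fin (3 * q)) ℝ)
    (hB : B = Matrix.of fun i j : Fin (3 * q) => if (i : ℕ) < q ∧ (j : ℕ) < q then (0:ℝ) else 1)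
    (hBh : B.IsHermitian) :
    B.rank = 2 ∧
      (⨆ i, hBh.eigenvalues i) - (⨅ i, hBh.eigenvalues i) = 2 * Real.sqrt 3 * q := by
  have hq0 : (0:ℝ) < q := by exact_mod_cast hq
  have hqm : q ≤ 3 * q := by omega
  have h3q : (3 * q - q : ℕ) = 2 * q := by omega
  -- trace of B
  have htr : B.trace = 2 * q := by
    rw [hB, Matrix.trace]
    simp only [Matrix.diag_apply, Matrix.of_apply, and_self]
    rw [Fin.sum_univ_eq_sum_range (fun i => if i < q then (0:ℝ) else 1) (3 * q),
      my_sum_ite q (3 * q) hqm 0 1, h3q]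
    push_cast; ring
  -- trace of B * B
  have htr2 : (B * B).trace = 8 * (q:ℝ) ^ 2 := by
    have row : ∀ i : Fin (3 * q), ∑ j, B i j * B j i
        = if (i:ℕ) < q then (2 * q : ℝ) else 3 * q := by
      intro i
      have hBB : ∀ j : Fin (3 * q), B i j * B j i = B i j := by
        intro j
        rw [hB]
        simp only [Matrix.of_apply]
        by_cases h : (i:ℕ) < q ∧ (j:ℕ) < q
        · simp [h, and_comm]
        · have h' : ¬((j:ℕ) < q ∧ (i:ℕ) < q) := fun hc => h ⟨hc.2, hc.1⟩
          simp [h, h']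
      rw [Finset.sum_congr rfl (fun j _ => hBB j)]
      by_cases hi : (i:ℕ) < q
      · simp only [hi, if_true, hB, Matrix.of_apply, true_and]
        rw [Fin.sum_univ_eq_sum_range (fun j => if j < q then (0:ℝ) else 1) (3 * q),
          my_sum_ite q (3 * q) hqm 0 1, h3q]
        push_cast; ring
      · simp only [hi, if_false, hB, Matrix.of_apply, false_and]
        simp
    rw [Matrix.trace]
    simp only [Matrix.diag_apply, Matrix.mul_apply]
    rw [Finset.sum_congr rfl (fun i _ => row i),
      Fin.sum_univ_eq_sum_range (fun i => if i < q then (2 * q : ℝ) else 3 * q) (3 * q),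
      my_sum_ite q (3 * q) hqm (2 * q) (3 * q), h3q]
    push_cast; ring
  -- rank ≤ 2 via factorization
  have hrank_le : B.rank ≤ 2 := by
    set P : Matrix (Fin (3 * q)) (Fin 2) ℝ :=
      Matrix.of fun i k => if k = 0 then (1:ℝ) else (if (i:ℕ) < q then 1 else 0) with hP
    set Q : Matrix (Fin 2) (Fin (3 * q)) ℝ :=
      Matrix.of fun k j => if k = 0 then (1:ℝ) else (if (j:ℕ) < q then -1 else 0) with hQ
    have hfac : B = P * Q := by
      ext i j
      rw [hB, Matrix.mul_apply, Fin.sum_univ_two]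
      simp only [hP, hQ, Matrix.of_apply]
      by_cases hi : (i:ℕ) < q <;> by_cases hj : (j:ℕ) < q <;> norm_num [hi, hj]
    calc B.rank = (P * Q).rank := by rw [hfac]
      _ ≤ P.rank := Matrix.rank_mul_le_left P Q
      _ ≤ Fintype.card (Fin 2) := Matrix.rank_le_card_width P
      _ = 2 := by simp
  -- eigenvalue bookkeeping
  set f := hBh.eigenvalues with hf
  have hsum : ∑ i, f i = 2 * q := by rw [← my_trace_eq_sum_eigenvalues hBh, htr]
  have hsumsq : ∑ i, f i ^ 2 = 8 * (q:ℝ) ^ 2 := by rw [← my_trace_sq_eq_sum_sq hBh, htr2]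
  set s : Finset (Fin (3 * q)) := Finset.univ.filter (fun i => f i ≠ 0) with hs
  have hcard_rank : B.rank = s.card := by
    rw [hBh.rank_eq_card_non_zero_eigs, Fintype.card_subtype]
  have hsum_s : ∑ i ∈ s, f i = 2 * q := by
    rw [hs, Finset.sum_filter_ne_zero, hsum]
  have hsumsq_s : ∑ i ∈ s, f i ^ 2 = 8 * (q:ℝ) ^ 2 := by
    rw [← hsumsq]
    refine Finset.sum_subset (Finset.subset_univ s) ?_
    intro i _ hi
    have : f i = 0 := by
      by_contra h
      exact hi (Finset.mem_filter.mpr ⟨Finset.mem_univ i, h⟩)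
    rw [this]; ring
  have hcard2 : s.card = 2 := by
    have hle : s.card ≤ 2 := hcard_rank ▸ hrank_le
    interval_cases h : s.card
    · exfalso
      rw [Finset.card_eq_zero.mp h, Finset.sum_empty] at hsum_s
      nlinarith
    · exfalso
      obtain ⟨a, ha⟩ := Finset.card_eq_one.mp h
      rw [ha, Finset.sum_singleton] at hsum_s hsumsq_s
      nlinarith
    · rfl
  obtain ⟨a, b, hab, hsab⟩ := Finset.card_eq_two.mp hcard2
  have hsum_ab : f a + f b = 2 * q := by
    rw [hsab, Finset.sum_pair hab] at hsum_s; exact hsum_s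
  have hsumsq_ab : f a ^ 2 + f b ^ 2 = 8 * (q:ℝ) ^ 2 := by
    rw [hsab, Finset.sum_pair hab] at hsumsq_s; exact hsumsq_s
  have hprod : f a * f b = -2 * (q:ℝ) ^ 2 := by nlinarith
  have hzero : ∀ i, i ≠ a → i ≠ b → f i = 0 := by
    intro i hia hib
    by_contra h
    have : i ∈ s := Finset.mem_filter.mpr ⟨Finset.mem_univ i, h⟩
    rw [hsab, Finset.mem_insert, Finset.mem_singleton] at this
    tauto
  set μ := max (f a) (f b) with hμ
  set ν := min (f a) (f b) with hν
  have hμν_sum : μ + ν = 2 * q := by rw [hμ, hν, max_add_min]; exact hsum_ab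
  have hμν_prod : μ * ν = -2 * (q:ℝ) ^ 2 := by
    rcases le_total (f a) (f b) with h | h
    · rw [hμ, hν, max_eq_right h, min_eq_left h, mul_comm]; exact hprod
    · rw [hμ, hν, max_eq_left h, min_eq_right h]; exact hprod
  have hνneg : ν < 0 := by nlinarith [le_max_left (f a) (f b), min_le_max (a := f a) (b := f b)]
  have hμpos : 0 < μ := by nlinarith
  have hub : ∀ i, f i ≤ μ := by
    intro i
    by_cases hia : i = a
    · rw [hia]; exact le_max_left _ _
    by_cases hib : i = b
    · rw [hib]; exact le_max_right _ _
    · rw [hzero i hia hib]; exact hμpos.le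
  have hlb : ∀ i, ν ≤ f i := by
    intro i
    by_cases hia : i = a
    · rw [hia]; exact min_le_left _ _
    by_cases hib : i = b
    · rw [hib]; exact min_le_right _ _
    · rw [hzero i hia hib]; exact hνneg.le
  have hne : Nonempty (Fin (3 * q)) := ⟨⟨0, by omega⟩⟩
  have hsup : (⨆ i, f i) = μ := by
    apply le_antisymm (ciSup_le hub)
    rcases max_choice (f a) (f b) with h | h
    · rw [← hμ] at *; rw [h]; exact le_ciSup (Set.finite_range f).bddAbove a
    · rw [← hμ] at *; rw [h]; exact le_ciSup (Set.finite_range f).bddAbove b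
  have hinf : (⨅ i, f i) = ν := by
    apply le_antisymm _ (le_ciInf hlb)
    rcases min_choice (f a) (f b) with h | h
    · rw [← hν] at *; rw [h]; exact ciInf_le (Set.finite_range f).bddBelow a
    · rw [← hν] at *; rw [h]; exact ciInf_le (Set.finite_range f).bddBelow b
  refine ⟨by rw [hcard_rank, hcard2], ?_⟩
  rw [hsup, hinf]
  have h3 : Real.sqrt 3 ^ 2 = 3 := Real.sq_sqrt (by norm_num)
  have hsq : (μ - ν) ^ 2 = 12 * (q:ℝ) ^ 2 := by nlinarith
  have hfac0 : (μ - ν - 2 * Real.sqrt 3 * q) * (μ - ν + 2 * Real.sqrt 3 * q) = 0 := by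
    linear_combination hsq - 4 * (q:ℝ) ^ 2 * h3
  have hpos : 0 ≤ 2 * Real.sqrt 3 * (q:ℝ) := by positivity
  rcases mul_eq_zero.mp hfac0 with h | h
  · linarith
  · linarith
end

section
/- Let −1 ≤ a < 1, m ≥ 2, 1 ≤ k < m, and let A be the m×m symmetric matrix with A_{ij} = a when both i,j ≤ k and A_{ij} = 1 otherwise. Then spread(A) = sqrt((a² + 2a − 3)k² + 2m(1 − a)k + m²). -/
lemma sum_ite_lt (m k : ℕ) (hkm : k < m) (x y : ℝ) :
    ∑ l : Fin m, (if (l : ℕ) < k then x else y) = k * x + ((m : ℝ) - k) * y := by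
  classical
  rw [Finset.sum_ite, Finset.sum_const, Finset.sum_const]
  have h1 : (Finset.univ.filter fun l : Fin m => (l : ℕ) < k) = Finset.Iio ⟨k, hkm⟩ := by
    ext l; simp [Fin.lt_def]
  have h2 : (Finset.univ.filter fun l : Fin m => ¬ (l : ℕ) < k).card = m - k := by
    have h3 := Finset.card_filter_add_card_filter_not (s := (Finset.univ : Finset (Fin m)))
      (p := fun l : Fin m => (l : ℕ) < k)
    rw [h1, Fin.card_Iio, Finset.card_univ, Fintype.card_fin] at h3
    simp only [Fin.val_mk] at h3
    omega
  rw [h1, h2, Fin.card_Iio]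
  simp only [nsmul_eq_mul, Nat.cast_sub hkm.le, Fin.val_mk]

lemma sq_block (m k : ℕ) (hkm : k < m) (a : ℝ)
    (A : Matrix (Fin m) (Fin m) ℝ)
    (hA : A = Matrix.of fun i j : Fin m =>
      if (i : ℕ) < k ∧ (j : ℕ) < k then a else 1) :
    A * A = Matrix.of fun i j : Fin m =>
      if (i : ℕ) < k ∧ (j : ℕ) < k then k * a ^ 2 + ((m : ℝ) - k)
      else if (i : ℕ) < k ∨ (j : ℕ) < k then k * a + ((m : ℝ) - k)
      else (m : ℝ) := by
  subst hA
  ext i j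
  rw [Matrix.mul_apply]
  simp only [Matrix.of_apply]
  by_cases hi : (i : ℕ) < k <;> by_cases hj : (j : ℕ) < k <;>
    simp only [hi, hj, and_true, and_false, true_and, false_and, if_true, if_false,
      true_or, or_true, or_false, false_or, ite_self]
  · have h : ∀ l : Fin m, (if (l:ℕ) < k then a else 1) * (if (l:ℕ) < k then a else 1)
        = if (l:ℕ) < k then a * a else 1 := fun l => by by_cases h : (l:ℕ) < k <;> simp [h]
    rw [Finset.sum_congr rfl fun l _ => h l, sum_ite_lt m k hkm]; ring
  · simp only [mul_one]
    rw [sum_ite_lt m k hkm]; ring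
  · simp only [one_mul]
    rw [sum_ite_lt m k hkm]; ring
  · simp only [mul_one]
    rw [Finset.sum_const, Finset.card_univ, Fintype.card_fin, nsmul_eq_mul, mul_one]

lemma ite_mul_ite' (p : Prop) [Decidable p] (x y u v : ℝ) :
    (if p then x else y) * (if p then u else v) = if p then x * u else y * v := by
  split <;> rfl

lemma cube_block (m k : ℕ) (hkm : k < m) (a : ℝ)
    (A : Matrix (Fin m) (Fin m) ℝ)
    (hA : A = Matrix.of fun i j : Fin m =>
      if (i : ℕ) < k ∧ (j : ℕ) < k then a else 1) :
    A * A * A = (a * k + ((m : ℝ) - k)) • (A * A)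
      - ((k : ℝ) * ((m : ℝ) - k) * (a - 1)) • A := by
  have h2 := sq_block m k hkm a A hA
  rw [h2, hA]
  ext i j
  rw [Matrix.mul_apply]
  simp only [Matrix.of_apply, Matrix.sub_apply, Matrix.smul_apply, smul_eq_mul]
  by_cases hi : (i : ℕ) < k <;> by_cases hj : (j : ℕ) < k <;>
    simp only [hi, hj, and_true, and_false, true_and, false_and, if_true, if_false,
      true_or, or_true, or_false, false_or, ite_self, mul_one] <;>
    (try simp only [ite_mul_ite', mul_one, one_mul]) <;>
    rw [sum_ite_lt m k hkm] <;> ring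

/-- For `-1 ≤ a < 1`, `1 ≤ k < m`, the symmetric matrix with an `a`-valued `k × k`
top-left block and ones elsewhere has spread `√((a²+2a−3)k² + 2m(1−a)k + m²)`. -/
theorem spread_rank_two_block (m k : ℕ) (hm : 2 ≤ m) (hk : 1 ≤ k) (hkm : k < m)
    (a : ℝ) (ha : -1 ≤ a) (ha' : a < 1)
    (A : Matrix (Fin m) (Fin m) ℝ)
    (hA : A = Matrix.of fun i j : Fin m =>
      if (i : ℕ) < k ∧ (j : ℕ) < k then a else 1)
    (hAh : A.IsHermitian) :
    (⨆ i, hAh.eigenvalues i) - (⨅ i, hAh.eigenvalues i) =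
      Real.sqrt ((a ^ 2 + 2 * a - 3) * k ^ 2 + 2 * m * (1 - a) * k + m ^ 2) := by
  classical
  haveI : Nonempty (Fin m) := ⟨⟨0, by omega⟩⟩
  obtain ⟨μ, hμ⟩ : ∃ f : Fin m → ℝ, f = hAh.eigenvalues := ⟨_, rfl⟩
  rw [← hμ]
  obtain ⟨U, hUdef⟩ : ∃ B : Matrix (Fin m) (Fin m) ℝ, B = (hAh.eigenvectorUnitary : Matrix (Fin m) (Fin m) ℝ) := ⟨_, rfl⟩
  obtain ⟨D, hDdef⟩ : ∃ B : Matrix (Fin m) (Fin m) ℝ, B = Matrix.diagonal μ := ⟨_, rfl⟩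
  have hU1 : U * star U = 1 := by rw [hUdef]; exact (Matrix.mem_unitaryGroup_iff).mp hAh.eigenvectorUnitary.2
  have hU2 : star U * U = 1 := by rw [hUdef]; exact (Matrix.mem_unitaryGroup_iff').mp hAh.eigenvectorUnitary.2
  have hcancel : ∀ X : Matrix (Fin m) (Fin m) ℝ, U * (star U * X) = X := fun X => by
    rw [← Matrix.mul_assoc, hU1, Matrix.one_mul]
  have hDiag : star U * A * U = D := by
    rw [hUdef, hDdef, hμ]
    have h := hAh.conjStarAlgAut_star_eigenvectorUnitary
    simpa using h
  have conj : ∀ B C : Matrix (Fin m) (Fin m) ℝ,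
      star U * (B * C) * U = (star U * B * U) * (star U * C * U) := by
    intro B C
    simp only [Matrix.mul_assoc]
    rw [hcancel]
  have hD2 : star U * (A * A) * U = D * D := by rw [conj, hDiag]
  have hD3 : star U * (A * A * A) * U = D * D * D := by rw [conj, hD2, hDiag]
  obtain ⟨t, ht_def⟩ : ∃ t : ℝ, t = a * k + ((m : ℝ) - k) := ⟨_, rfl⟩
  obtain ⟨d, hd_def⟩ : ∃ d : ℝ, d = (k : ℝ) * ((m : ℝ) - k) * (a - 1) := ⟨_, rfl⟩
  -- cubic identity for D
  have hDcube : D * D * D = t • (D * D) - d • D := by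
    rw [← hD3, ← hD2, ← hDiag, ht_def, hd_def, cube_block m k hkm a A hA]
    simp only [Matrix.sub_mul, Matrix.mul_sub, Matrix.smul_mul, Matrix.mul_smul]
  have hDcube2 : Matrix.diagonal (fun i => μ i * μ i * μ i)
      = t • Matrix.diagonal (fun i => μ i * μ i) - d • Matrix.diagonal μ := by
    have h := hDcube
    rw [hDdef, Matrix.diagonal_mul_diagonal, Matrix.diagonal_mul_diagonal] at h
    exact h
  have hcub : ∀ i : Fin m, μ i * μ i * μ i = t * (μ i * μ i) - d * μ i := by
    intro i
    have h := congrFun (congrFun hDcube2 i) i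
    simpa [Matrix.diagonal_apply_eq, Matrix.sub_apply, Matrix.smul_apply, smul_eq_mul] using h
  -- trace identities
  have htrA : ∑ i, μ i = t := by
    have h1 : Matrix.trace (star U * A * U) = Matrix.trace A := by
      rw [Matrix.trace_mul_comm (star U * A) U, ← Matrix.mul_assoc, hU1, Matrix.one_mul]
    rw [hDiag] at h1
    have h2 : Matrix.trace D = ∑ i, μ i := by rw [hDdef]; simp [Matrix.trace_diagonal]
    have h3 : Matrix.trace A = t := by
      rw [hA, ht_def]
      simp only [Matrix.trace, Matrix.diag, Matrix.of_apply, and_self]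
      rw [sum_ite_lt m k hkm]
      ring
    rw [← h2, h1, h3]
  have htrA2 : ∑ i, μ i * μ i = t * t - 2 * d := by
    have h1 : Matrix.trace (star U * (A * A) * U) = Matrix.trace (A * A) := by
      rw [Matrix.trace_mul_comm (star U * (A * A)) U, ← Matrix.mul_assoc, hU1, Matrix.one_mul]
    rw [hD2] at h1
    have h2 : Matrix.trace (D * D) = ∑ i, μ i * μ i := by
      rw [hDdef, Matrix.diagonal_mul_diagonal]
      simp [Matrix.trace_diagonal]
    have h3 : Matrix.trace (A * A) = t * t - 2 * d := by
      rw [sq_block m k hkm a A hA]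
      simp only [Matrix.trace, Matrix.diag, Matrix.of_apply, and_self, or_self]
      have h4 : ∀ i : Fin m, (if (i : ℕ) < k then (k : ℝ) * a ^ 2 + ((m : ℝ) - k)
          else if (i : ℕ) < k then (k : ℝ) * a + ((m : ℝ) - k) else (m : ℝ))
          = if (i : ℕ) < k then (k : ℝ) * a ^ 2 + ((m : ℝ) - k) else (m : ℝ) := by
        intro i; split_ifs <;> rfl
      rw [Finset.sum_congr rfl fun i _ => h4 i, sum_ite_lt m k hkm]
      rw [ht_def, hd_def]; ring
    rw [← h2, h1, h3]
  -- numerics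
  have hkR : (1 : ℝ) ≤ (k : ℝ) := by exact_mod_cast hk
  have hmR : (k : ℝ) < (m : ℝ) := by exact_mod_cast hkm
  have hd : d < 0 := by
    rw [hd_def]
    have h1 : (0 : ℝ) < k := by linarith
    have h2 : (0 : ℝ) < (m : ℝ) - k := by linarith
    exact mul_neg_of_pos_of_neg (mul_pos h1 h2) (by linarith)
  obtain ⟨Δ, hΔ_def⟩ : ∃ x : ℝ, x = t ^ 2 - 4 * d := ⟨_, rfl⟩
  have hΔpos : 0 < Δ := by rw [hΔ_def]; nlinarith [sq_nonneg t]
  obtain ⟨s, hs_def⟩ : ∃ x : ℝ, x = Real.sqrt Δ := ⟨_, rfl⟩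
  have hs2 : s ^ 2 = Δ := by rw [hs_def]; exact Real.sq_sqrt hΔpos.le
  have hspos : 0 < s := by rw [hs_def]; exact Real.sqrt_pos.mpr hΔpos
  obtain ⟨lp, hlp_def⟩ : ∃ x : ℝ, x = (t + s) / 2 := ⟨_, rfl⟩
  obtain ⟨lm, hlm_def⟩ : ∃ x : ℝ, x = (t - s) / 2 := ⟨_, rfl⟩
  have hs_eq : lp - lm = s := by rw [hlp_def, hlm_def]; ring
  have hsum' : lp + lm = t := by rw [hlp_def, hlm_def]; ring
  have hprod : lp * lm = d := by
    rw [hlp_def, hlm_def]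
    rw [hΔ_def] at hs2
    linear_combination (-(1 : ℝ)/4) * hs2
  have hlp : 0 < lp := by
    rw [hΔ_def] at hs2
    rw [hlp_def]
    nlinarith [hs2, hd, hspos]
  have hlm : lm < 0 := by
    rw [hΔ_def] at hs2
    rw [hlm_def]
    nlinarith [hs2, hd, hspos]
  -- every eigenvalue is 0, lp or lm
  have hroot : ∀ i : Fin m, μ i = 0 ∨ μ i = lp ∨ μ i = lm := by
    intro i
    have h : μ i * (μ i - lp) * (μ i - lm) = 0 := by
      linear_combination hcub i - (μ i) ^ 2 * hsum' + (μ i) * hprod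
    rcases mul_eq_zero.mp h with h' | h'
    · rcases mul_eq_zero.mp h' with h'' | h''
      · exact Or.inl h''
      · exact Or.inr (Or.inl (by linarith [sub_eq_zero.mp h'']))
    · exact Or.inr (Or.inr (by linarith [sub_eq_zero.mp h']))
  have hb_up : ∀ i, μ i ≤ lp := by
    intro i; rcases hroot i with h | h | h <;> rw [h] <;> linarith
  have hb_lo : ∀ i, lm ≤ μ i := by
    intro i; rcases hroot i with h | h | h <;> rw [h] <;> linarith
  -- lp is attained
  have hexp : ∃ i, μ i = lp := by
    by_contra h
    push_neg at h
    have h0 : ∑ i, μ i * (μ i - lm) = 0 := by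
      apply Finset.sum_eq_zero
      intro i _
      rcases hroot i with h' | h' | h'
      · rw [h', zero_mul]
      · exact absurd h' (h i)
      · rw [h', sub_self, mul_zero]
    have hex : ∑ i, μ i * (μ i - lm) = (∑ i, μ i * μ i) - lm * ∑ i, μ i := by
      rw [Finset.mul_sum, ← Finset.sum_sub_distrib]
      exact Finset.sum_congr rfl fun i _ => by ring
    have hzero : lp * s = 0 := by
      rw [hex, htrA, htrA2] at h0
      linear_combination h0 + (lp + t) * hsum' - 2 * hprod - lp * hs_eq
    exact absurd hzero (ne_of_gt (mul_pos hlp hspos))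
  -- lm is attained
  have hexm : ∃ i, μ i = lm := by
    by_contra h
    push_neg at h
    have h0 : ∑ i, μ i * (μ i - lp) = 0 := by
      apply Finset.sum_eq_zero
      intro i _
      rcases hroot i with h' | h' | h'
      · rw [h', zero_mul]
      · rw [h', sub_self, mul_zero]
      · exact absurd h' (h i)
    have hex : ∑ i, μ i * (μ i - lp) = (∑ i, μ i * μ i) - lp * ∑ i, μ i := by
      rw [Finset.mul_sum, ← Finset.sum_sub_distrib]
      exact Finset.sum_congr rfl fun i _ => by ring
    have hzero : lm * s = 0 := by
      rw [hex, htrA, htrA2] at h0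
      linear_combination -h0 - (lm + t) * hsum' + 2 * hprod - lm * hs_eq
    have hneg : lm * s < 0 := mul_neg_of_neg_of_pos hlm hspos
    rw [hzero] at hneg
    exact lt_irrefl 0 hneg
  have hsup : (⨆ i, μ i) = lp := by
    apply le_antisymm (ciSup_le hb_up)
    obtain ⟨i, hi⟩ := hexp
    rw [← hi]
    exact le_ciSup (Set.finite_range μ).bddAbove i
  have hinf : (⨅ i, μ i) = lm := by
    refine le_antisymm ?_ (le_ciInf hb_lo)
    obtain ⟨i, hi⟩ := hexm
    rw [← hi]
    exact ciInf_le (Set.finite_range μ).bddBelow i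
  rw [hsup, hinf, hs_eq, hs_def]
  congr 1
  rw [hΔ_def, ht_def, hd_def]
  push_cast
  ring
end

section
/- For −1 ≤ a < 1, the m×m matrix A = [[a·J_k, J_{k,m−k}],[J_{m−k,k}, J_{m−k}]] with k = round(m/(a+3)) attains the Mirsky bound sqrt(2‖A‖_F² − (2/m)Tr(A)²) with equality if and only if a = −1 and m is even. -/
open Matrix

private lemma mirsky_blocksum (m k : ℕ) (hkm : k ≤ m) (x y : ℝ) :
    ∑ l : Fin m, (if (l : ℕ) < k then x else y) = k * x + ((m : ℝ) - k) * y := by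
  rw [Fin.sum_univ_eq_sum_range (fun l => if l < k then x else y) m, Finset.range_eq_Ico,
    ← Finset.sum_Ico_consecutive _ (Nat.zero_le k) hkm]
  have h1 : ∑ l ∈ Finset.Ico 0 k, (if l < k then x else y) = (k : ℝ) * x := by
    rw [Finset.sum_congr rfl fun l hl => if_pos (Finset.mem_Ico.mp hl).2]
    simp [mul_comm]
  have h2 : ∑ l ∈ Finset.Ico k m, (if l < k then x else y) = ((m : ℝ) - k) * y := by
    rw [Finset.sum_congr rfl fun l hl => if_neg (Nat.not_lt.mpr (Finset.mem_Ico.mp hl).1)]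
    rw [Finset.sum_const, Nat.card_Ico, nsmul_eq_mul, Nat.cast_sub hkm]
  rw [h1, h2]

set_option maxHeartbeats 1000000 in
/-- For `-1 ≤ a < 1` and the rank-two block matrix `A` with block size
`k = round (m/(a+3))`, `A` attains the Mirsky bound
`√(2‖A‖_F² − (2/m) Tr(A)²)` if and only if `a = -1` and `m` is even. -/
theorem mirsky_matrix_iff (m : ℕ) (hm : 3 ≤ m) (a : ℝ) (ha : -1 ≤ a) (ha' : a < 1)
    (k : ℕ) (hk : (k : ℤ) = round ((m : ℝ) / (a + 3)))
    (A : Matrix (Fin m) (Fin m) ℝ)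
    (hA : A = Matrix.of fun i j : Fin m =>
      if (i : ℕ) < k ∧ (j : ℕ) < k then a else 1)
    (hAh : A.IsHermitian) :
    (⨆ i, hAh.eigenvalues i) - (⨅ i, hAh.eigenvalues i) =
        Real.sqrt (2 * ∑ i, ∑ j, (A i j) ^ 2 - (2 / m) * (Matrix.trace A) ^ 2) ↔
      a = -1 ∧ Even m := by
  classical
  haveI : Nonempty (Fin m) := Fin.pos_iff_nonempty.mp (by omega)
  set M : ℝ := (m : ℝ) with hMdef
  set K : ℝ := (k : ℝ) with hKdef
  have hM3 : (3 : ℝ) ≤ M := by rw [hMdef]; exact_mod_cast hm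
  have ha3 : (2 : ℝ) ≤ a + 3 := by linarith
  have ha3' : a + 3 < 4 := by linarith
  have ha3pos : (0 : ℝ) < a + 3 := by linarith
  -- the rounding estimate
  have hkr : |M / (a + 3) - K| ≤ 1 / 2 := by
    have h := abs_sub_round (M / (a + 3))
    rw [← hk] at h
    exact_mod_cast h
  have hkr1 := (abs_le.mp hkr).1
  have hkr2 := (abs_le.mp hkr).2
  -- bounds on k
  have hx0lb : (3 : ℝ) / 4 < M / (a + 3) := by
    rw [div_lt_div_iff₀ (by norm_num) ha3pos]
    linarith
  have hx0ub : M / (a + 3) ≤ M / 2 := by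
    apply div_le_div_of_nonneg_left (by linarith) (by norm_num) ha3
  have hK1 : (1 : ℝ) ≤ K := by
    have h0 : (0 : ℝ) < K := by linarith
    have h1 : 0 < k := by
      rcases Nat.eq_zero_or_pos k with h | h
      · exfalso; rw [hKdef, h] at h0; norm_num at h0
      · exact h
    have h2 : 1 ≤ k := h1
    rw [hKdef]; exact_mod_cast h2
  have hKM : K < M := by linarith
  have hkm : k ≤ m := by
    have h1 : K ≤ M := le_of_lt hKM
    rw [hKdef, hMdef] at h1
    exact_mod_cast h1
  have hKpos : (0 : ℝ) < K := by linarith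
  have hMKpos : (0 : ℝ) < M - K := by linarith
  -- the key scalars
  obtain ⟨t, ht⟩ : ∃ t : ℝ, t = a * K + (M - K) := ⟨_, rfl⟩
  obtain ⟨d, hd⟩ : ∃ d : ℝ, d = K * (M - K) * (a - 1) := ⟨_, rfl⟩
  obtain ⟨X, hXdef⟩ : ∃ X : ℝ, X = t ^ 2 - 4 * d := ⟨_, rfl⟩
  obtain ⟨s, hsdef⟩ : ∃ s : ℝ, s = Real.sqrt X := ⟨_, rfl⟩
  obtain ⟨lp, hlp⟩ : ∃ lp : ℝ, lp = (t + s) / 2 := ⟨_, rfl⟩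
  obtain ⟨lm, hlm⟩ : ∃ lm : ℝ, lm = (t - s) / 2 := ⟨_, rfl⟩
  have hdneg : d < 0 := by
    rw [hd]
    exact mul_neg_of_pos_of_neg (mul_pos hKpos hMKpos) (by linarith)
  have hXpos : 0 < X := by rw [hXdef]; linarith [sq_nonneg t]
  have hs2 : s ^ 2 = X := by rw [hsdef]; exact Real.sq_sqrt hXpos.le
  have hspos : 0 < s := by rw [hsdef]; exact Real.sqrt_pos.mpr hXpos
  have hsum : lp + lm = t := by rw [hlp, hlm]; ring
  have hprod : lp * lm = d := by
    rw [hlp, hlm]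
    linear_combination (-1 / 4 : ℝ) * hs2 + (-1 / 4 : ℝ) * hXdef
  have hlmlp : lm < lp := by rw [hlp, hlm]; linarith
  have hlppos : 0 < lp := by
    by_contra hcon
    push_neg at hcon
    have h2 : 0 ≤ lp * lm := by
      rw [← neg_mul_neg]
      exact mul_nonneg (by linarith) (by linarith)
    rw [hprod] at h2; linarith
  have hlmneg : lm < 0 := by
    by_contra hcon
    push_neg at hcon
    have h2 : 0 ≤ lp * lm := mul_nonneg (by linarith) hcon
    rw [hprod] at h2; linarith
  -- entries of A and A*A, and the annihilating cubic
  have hAe : ∀ i j : Fin m, A i j =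
      if (j : ℕ) < k then (if (i : ℕ) < k then a else 1) else 1 := by
    intro i j
    by_cases hi : (i : ℕ) < k <;> by_cases hj : (j : ℕ) < k <;> simp [hA, hi, hj]
  have hB : ∀ i j : Fin m, (A * A) i j =
      K * ((if (i : ℕ) < k then a else 1) * (if (j : ℕ) < k then a else 1)) + (M - K) := by
    intro i j
    rw [Matrix.mul_apply]
    rw [Finset.sum_congr rfl (fun l _ => (by
      by_cases hl : (l : ℕ) < k <;> simp [hAe, hl] :
      A i l * A l j = if (l : ℕ) < k
        then (if (i : ℕ) < k then a else 1) * (if (j : ℕ) < k then a else 1) else 1))]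
    rw [mirsky_blocksum m k hkm _ 1, mul_one]
  have hC : ∀ i j : Fin m, (A * (A * A)) i j =
      K * ((if (i : ℕ) < k then a else 1) * (K * (a * (if (j : ℕ) < k then a else 1)) + (M - K)))
        + (M - K) * (K * (1 * (if (j : ℕ) < k then a else 1)) + (M - K)) := by
    intro i j
    rw [Matrix.mul_apply]
    rw [Finset.sum_congr rfl (fun l _ => (by
      by_cases hl : (l : ℕ) < k <;> simp [hAe, hB, hl] :
      A i l * (A * A) l j = if (l : ℕ) < k
        then (if (i : ℕ) < k then a else 1) *
          (K * (a * (if (j : ℕ) < k then a else 1)) + (M - K))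
        else (K * (1 * (if (j : ℕ) < k then a else 1)) + (M - K))))]
    rw [mirsky_blocksum m k hkm]
  have hcub : A * (A * A) = t • (A * A) - d • A := by
    ext i j
    rw [Matrix.sub_apply, Matrix.smul_apply, Matrix.smul_apply, hC, hB, hAe i j, smul_eq_mul,
      smul_eq_mul, ht, hd]
    by_cases hi : (i : ℕ) < k <;> by_cases hj : (j : ℕ) < k <;>
      simp only [hi, hj, if_true, if_false] <;> ring
  -- each eigenvalue satisfies the cubic
  set E : Fin m → ℝ := hAh.eigenvalues with hE
  have hmu : ∀ i : Fin m, (E i) ^ 3 - t * (E i) ^ 2 + d * (E i) = 0 := by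
    intro i
    have hv := hAh.mulVec_eigenvectorBasis i
    have hv0 : (⇑(hAh.eigenvectorBasis i) : Fin m → ℝ) ≠ 0 := by
      have h := hAh.eigenvectorBasis.orthonormal.ne_zero i
      intro hc
      exact h (by ext j; exact congrFun hc j)
    set v : Fin m → ℝ := ⇑(hAh.eigenvectorBasis i) with hvdef
    have hAv2 : (A * A) *ᵥ v = (E i ^ 2) • v := by
      rw [← Matrix.mulVec_mulVec, hv, Matrix.mulVec_smul, hv, smul_smul, pow_two]
    have h1 : (A * (A * A)) *ᵥ v = (E i ^ 3) • v := by
      rw [← Matrix.mulVec_mulVec, hAv2, Matrix.mulVec_smul, hv, smul_smul]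
      norm_num
      ring_nf
      rw [hE]; congr 1
    have h2 : (A * (A * A)) *ᵥ v = (t * E i ^ 2 - d * E i) • v := by
      rw [hcub, Matrix.sub_mulVec, Matrix.smul_mulVec, Matrix.smul_mulVec, hAv2, hv,
        smul_smul, smul_smul, sub_smul]
    have h3 : (E i ^ 3 - (t * E i ^ 2 - d * E i)) • v = 0 := by
      rw [sub_smul, h1.symm.trans h2]; abel
    rcases smul_eq_zero.mp h3 with h | h
    · linarith
    · exact absurd h hv0
  have htri : ∀ i : Fin m, E i = 0 ∨ E i = lp ∨ E i = lm := by
    intro i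
    have h0 : E i * ((E i - lp) * (E i - lm)) = 0 := by
      linear_combination hmu i - (E i) ^ 2 * hsum + (E i) * hprod
    rcases mul_eq_zero.mp h0 with h | h
    · exact Or.inl h
    rcases mul_eq_zero.mp h with h | h
    · exact Or.inr (Or.inl (by linarith [sub_eq_zero.mp h]))
    · exact Or.inr (Or.inr (by linarith [sub_eq_zero.mp h]))
  -- traces
  have hU1 : star ((Matrix.IsHermitian.eigenvectorUnitary hAh : Matrix (Fin m) (Fin m) ℝ)) *
      (Matrix.IsHermitian.eigenvectorUnitary hAh : Matrix (Fin m) (Fin m) ℝ) = 1 :=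
    Unitary.coe_star_mul_self _
  have htrA_eig : Matrix.trace A = ∑ i, E i := by
    have h1 := congrArg Matrix.trace hAh.spectral_theorem
    rw [h1, Unitary.conjStarAlgAut_apply, Matrix.trace_mul_cycle, hU1, Matrix.one_mul, Matrix.trace_diagonal]
    simp [RCLike.ofReal, hE]
  have htrAA_eig : Matrix.trace (A * A) = ∑ i, (E i) ^ 2 := by
    have hAA : Matrix.trace (A * A) =
        Matrix.trace ((Matrix.IsHermitian.eigenvectorUnitary hAh : Matrix (Fin m) (Fin m) ℝ) *
          ((Matrix.diagonal (RCLike.ofReal ∘ hAh.eigenvalues)) *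
            (Matrix.diagonal (RCLike.ofReal ∘ hAh.eigenvalues))) *
          star (Matrix.IsHermitian.eigenvectorUnitary hAh : Matrix (Fin m) (Fin m) ℝ)) := by
      have hU1' : ∀ Y : Matrix (Fin m) (Fin m) ℝ,
          star ((Matrix.IsHermitian.eigenvectorUnitary hAh : Matrix (Fin m) (Fin m) ℝ)) *
            ((Matrix.IsHermitian.eigenvectorUnitary hAh : Matrix (Fin m) (Fin m) ℝ) * Y) = Y := by
        intro Y; rw [← Matrix.mul_assoc, hU1, Matrix.one_mul]
      congr 1
      conv_lhs => rw [hAh.spectral_theorem, Unitary.conjStarAlgAut_apply]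
      simp only [Matrix.mul_assoc, hU1']
    rw [hAA, Matrix.trace_mul_cycle, hU1, Matrix.one_mul, Matrix.diagonal_mul_diagonal,
      Matrix.trace_diagonal]
    simp [RCLike.ofReal, pow_two, hE]
  have htr : Matrix.trace A = t := by
    rw [Matrix.trace]
    rw [Finset.sum_congr rfl (fun i _ => (by
      by_cases hi : (i : ℕ) < k <;> simp [Matrix.diag, hAe, hi] :
      A.diag i = if (i : ℕ) < k then a else 1))]
    rw [mirsky_blocksum m k hkm, mul_one, ht]
    ring
  have htrAA : Matrix.trace (A * A) = t ^ 2 - 2 * d := by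
    rw [Matrix.trace]
    rw [Finset.sum_congr rfl (fun i _ => (by
      by_cases hi : (i : ℕ) < k <;> simp [Matrix.diag, hB, hi] :
      (A * A).diag i = if (i : ℕ) < k then K * (a * a) + (M - K) else K * (1 * 1) + (M - K)))]
    rw [mirsky_blocksum m k hkm, ht, hd]
    ring
  -- counting eigenvalues
  set P : Finset (Fin m) := Finset.univ.filter (fun i => E i = lp) with hPdef
  set Q : Finset (Fin m) := Finset.univ.filter (fun i => E i = lm) with hQdef
  have hkey : ∀ f : ℝ → ℝ, f 0 = 0 → ∑ i, f (E i) = P.card * f lp + Q.card * f lm := by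
    intro f hf
    have hpt : ∀ i, f (E i) = (if i ∈ P then f lp else 0) + (if i ∈ Q then f lm else 0) := by
      intro i
      have hiP : i ∈ P ↔ E i = lp := by simp [hPdef]
      have hiQ : i ∈ Q ↔ E i = lm := by simp [hQdef]
      rcases htri i with h | h | h
      · rw [if_neg (fun hc => by rw [hiP.mp hc] at h; linarith),
          if_neg (fun hc => by rw [hiQ.mp hc] at h; linarith), h, hf, add_zero]
      · rw [if_pos (hiP.mpr h), if_neg (fun hc => by rw [hiQ.mp hc] at h; linarith), h, add_zero]
      · rw [if_neg (fun hc => by rw [hiP.mp hc] at h; linarith), if_pos (hiQ.mpr h), h, zero_add]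
    rw [Finset.sum_congr rfl (fun i _ => hpt i), Finset.sum_add_distrib,
      Finset.sum_ite_mem, Finset.sum_ite_mem, Finset.univ_inter, Finset.univ_inter,
      Finset.sum_const, Finset.sum_const, nsmul_eq_mul, nsmul_eq_mul]
  have e1 : (P.card : ℝ) * lp + (Q.card : ℝ) * lm = lp + lm := by
    have h := hkey id rfl
    simp only [id] at h
    rw [← h, ← htrA_eig, htr, ← hsum]
  have e2 : (P.card : ℝ) * lp ^ 2 + (Q.card : ℝ) * lm ^ 2 = lp ^ 2 + lm ^ 2 := by
    have h := hkey (fun x => x ^ 2) (by norm_num)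
    rw [← h, ← htrAA_eig, htrAA]
    linear_combination (-(lp + lm + t)) * hsum + 2 * hprod
  have hq1 : (Q.card : ℝ) = 1 := by
    have h3 : ((Q.card : ℝ) - 1) * (lm * (lm - lp)) = 0 := by linear_combination e2 - lp * e1
    have h4 : 0 < lm * (lm - lp) := mul_pos_of_neg_of_neg hlmneg (by linarith)
    rcases mul_eq_zero.mp h3 with h | h
    · linarith
    · linarith
  have hp1 : (P.card : ℝ) = 1 := by
    have h5 : ((P.card : ℝ) - 1) * lp = 0 := by linear_combination e1 - lm * hq1
    rcases mul_eq_zero.mp h5 with h | h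
    · linarith
    · linarith
  obtain ⟨i0, hi0⟩ := Finset.card_pos.mp (show 0 < P.card by
    have : P.card = 1 := by exact_mod_cast hp1
    omega)
  obtain ⟨i1, hi1⟩ := Finset.card_pos.mp (show 0 < Q.card by
    have : Q.card = 1 := by exact_mod_cast hq1
    omega)
  have hi0E : E i0 = lp := (Finset.mem_filter.mp hi0).2
  have hi1E : E i1 = lm := (Finset.mem_filter.mp hi1).2
  -- sup and inf
  have hsup : (⨆ i, E i) = lp := by
    apply le_antisymm
    · exact ciSup_le fun i => by rcases htri i with h | h | h <;> rw [h] <;> linarith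
    · exact hi0E ▸ le_ciSup (Finite.bddAbove_range E) i0
  have hinf : (⨅ i, E i) = lm := by
    apply le_antisymm
    · exact hi1E ▸ ciInf_le (Finite.bddBelow_range E) i1
    · exact le_ciInf fun i => by rcases htri i with h | h | h <;> rw [h] <;> linarith
  -- Frobenius norm
  have hS : ∑ i, ∑ j, (A i j) ^ 2 = a ^ 2 * K ^ 2 + (M ^ 2 - K ^ 2) := by
    have hinner : ∀ i : Fin m, ∑ j, (A i j) ^ 2 =
        if (i : ℕ) < k then K * (a * a) + (M - K) else K * (1 * 1) + (M - K) := by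
      intro i
      rw [Finset.sum_congr rfl (fun j _ => (by
        by_cases hi : (i : ℕ) < k <;> by_cases hj : (j : ℕ) < k <;>
          simp [hAe, hi, hj] <;> ring :
        (A i j) ^ 2 = if (j : ℕ) < k
          then (if (i : ℕ) < k then a else 1) * (if (i : ℕ) < k then a else 1) else 1))]
      rw [mirsky_blocksum m k hkm _ 1, mul_one]
      by_cases hi : (i : ℕ) < k <;> simp [hi] <;> ring
    rw [Finset.sum_congr rfl (fun i _ => hinner i), mirsky_blocksum m k hkm]
    ring
  -- rewrite the goal
  rw [hsup, hinf, hS, htr]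
  have hM0 : M ≠ 0 := by linarith
  have hrhsarg : 2 * (a ^ 2 * K ^ 2 + (M ^ 2 - K ^ 2)) - 2 / M * t ^ 2
      = X + t ^ 2 * ((M - 2) / M) := by
    rw [hXdef, ht, hd]
    field_simp
    ring
  rw [hrhsarg]
  have hlhs : lp - lm = s := by rw [hlp, hlm]; ring
  rw [hlhs, hsdef]
  have harg2 : 0 ≤ t ^ 2 * ((M - 2) / M) :=
    mul_nonneg (sq_nonneg t) (div_nonneg (by linarith) (by linarith))
  have hiff1 : Real.sqrt X = Real.sqrt (X + t ^ 2 * ((M - 2) / M)) ↔ t = 0 := by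
    rw [Real.sqrt_inj hXpos.le (by linarith)]
    constructor
    · intro h
      have h2 : t ^ 2 * ((M - 2) / M) = 0 := by linarith
      have h3 : (M - 2) / M ≠ 0 := ne_of_gt (div_pos (by linarith) (by linarith))
      have h4 : t ^ 2 = 0 := by
        rcases mul_eq_zero.mp h2 with h | h
        · exact h
        · exact absurd h h3
      exact pow_eq_zero_iff (by norm_num) |>.mp h4
    · intro h; rw [h]; ring
  rw [hiff1]
  -- the arithmetic characterization of t = 0
  constructor
  · intro h0
    have heq0 : a * K + (M - K) = 0 := by rw [← ht, h0]
    have hm2kR : M ≤ 2 * K := by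
      have hp1' : 0 ≤ (a + 1) * K := mul_nonneg (by linarith) hKpos.le
      have hp2' : (a + 1) * K = a * K + K := by ring
      linarith
    have hm2k : m ≤ 2 * k := by exact_mod_cast (by push_cast; exact hm2kR : (m : ℝ) ≤ ((2 * k : ℕ) : ℝ))
    have hnot : ¬ m < 2 * k := by
      intro hlt
      have hltR : M + 1 ≤ 2 * K := by
        have : ((m + 1 : ℕ) : ℝ) ≤ ((2 * k : ℕ) : ℝ) := by exact_mod_cast hlt
        push_cast at this
        linarith
      have hax : (a + 3) * K = 4 * K - M := by
        have : (a + 3) * K = a * K + 3 * K := by ring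
        linarith
      have hcpos : (0 : ℝ) < 4 * K - M := by linarith
      have hxval : M / (a + 3) = M * K / (4 * K - M) := by
        rw [← hax]
        field_simp
      have h5 : K - M * K / (4 * K - M) = 2 * K * (2 * K - M) / (4 * K - M) := by
        rw [eq_div_iff hcpos.ne', sub_mul, div_mul_cancel₀ _ hcpos.ne']
        ring
      have h6 : 1 / 2 < 2 * K * (2 * K - M) / (4 * K - M) := by
        rw [div_lt_div_iff₀ (by norm_num) hcpos]
        have h61 : 0 ≤ (2 * K - M - 1) * (4 * K) :=
          mul_nonneg (by linarith) (by linarith)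
        have h62 : (2 * K - M - 1) * (4 * K) = 2 * K * (2 * K - M) * 2 - 4 * K := by ring
        linarith
      rw [hxval] at hkr1
      linarith
    have hmk : m = 2 * k := by omega
    have hM2K : M = 2 * K := by rw [hMdef, hKdef]; exact_mod_cast congrArg (Nat.cast : ℕ → ℝ) hmk
    constructor
    · have h7 : (a + 1) * K = 0 := by
        have : (a + 1) * K = a * K + K := by ring
        rw [hM2K] at heq0
        linarith
      rcases mul_eq_zero.mp h7 with h | h
      · linarith
      · linarith
    · exact ⟨k, by omega⟩
  · rintro ⟨ha1, n, hn⟩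
    have hMn : M = 2 * (n : ℝ) := by rw [hMdef]; exact_mod_cast congrArg (Nat.cast : ℕ → ℝ) (by omega : m = 2 * n)
    have hkn : k = n := by
      have : ((m : ℝ) / (a + 3)) = ((n : ℤ) : ℝ) := by
        rw [ha1]
        push_cast
        rw [← hMdef, hMn]
        ring
      rw [this, round_intCast] at hk
      exact_mod_cast hk
    have hKn : K = (n : ℝ) := by rw [hKdef]; exact_mod_cast congrArg (Nat.cast : ℕ → ℝ) hkn
    rw [ht, ha1, hKn, hMn]
    ring
end
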